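/- arXiv:0710.1278 — 6 statements merged into one kernel-verified Lean document; each statement's English description precedes it below -/
import Mathlib

section
/- Let A be a matrix representation of a quiver Q over 𝔽 such that A_α is an identity matrix for some arrow α : p₁ → p₂ with p₁ ≠ p₂. Let Q' be the quiver obtained from Q by removing the arrow α and merging the vertices p₁ and p₂ into a single vertex p (each other arrow connecting p₁ and p₂ becomes a loop at p), and let A' be the representation of Q' obtained from A by removing A_α. Then for every miniversal deformation A'(λ₁,…,λ_k) of A', the deformation of A obtained from A'(λ₁,…,λ_k) by assigning the identity matrix to the arrow α is a miniversal deformation of A. -/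
open Matrix Filter Pointwise

/-- The space of matrix representations of a quiver with vertex set `V`,
arrow set `Arrow` (an arrow `α` goes from `src α` to `tgt α`), where the
vector space attached to the vertex `v` has basis indexed by `N v`:
the representation assigns to each arrow `α` a matrix in `𝔽^{N (tgt α) × N (src α)}`. -/
abbrev QRep (V Arrow : Type) (src tgt : Arrow → V) (N : V → Type) (𝔽 : Type) : Type :=
  ∀ α : Arrow, Matrix (N (tgt α)) (N (src α)) 𝔽

/-- The index set `Υ` of triples `(α, i, j)`. -/
abbrev QIdx (V Arrow : Type) (src tgt : Arrow → V) (N : V → Type) : Type :=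
  Σ α : Arrow, N (tgt α) × N (src α)

variable {V Arrow : Type} {src tgt : Arrow → V} {N : V → Type} {𝔽 : Type} [RCLike 𝔽]

/-- `D` is a deformation of `A`: a family of representations, depending on
parameters `λ : ι → 𝔽`, whose matrix entries are analytic (= given by convergent
power series) in a neighbourhood of `0`, with `D 0 = A`. -/
def IsDeformation {ι : Type} [Fintype ι]
    (A : QRep V Arrow src tgt N 𝔽) (D : (ι → 𝔽) → QRep V Arrow src tgt N 𝔽) : Prop :=
  D 0 = A ∧ ∀ α i j, AnalyticAt 𝔽 (fun lam => D lam α i j) (0 : ι → 𝔽)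

/-- Equivalence of deformations: `E` is obtained from `D` by an analytic family
of isomorphisms `I v lam` with `I v 0 = 1`. -/
def DefEquiv [∀ v, Fintype (N v)] [∀ v, DecidableEq (N v)] {ι : Type} [Fintype ι]
    (D E : (ι → 𝔽) → QRep V Arrow src tgt N 𝔽) : Prop :=
  ∃ I : ∀ v : V, (ι → 𝔽) → Matrix (N v) (N v) 𝔽,
    (∀ v, I v 0 = 1) ∧
    (∀ v i j, AnalyticAt 𝔽 (fun lam => I v lam i j) (0 : ι → 𝔽)) ∧
    ∀ α, ∀ᶠ lam in nhds (0 : ι → 𝔽),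
      E lam α = I (tgt α) lam * D lam α * (I (src α) lam)⁻¹

/-- A deformation `D` of `A` is versal if every deformation `B` of `A` is
equivalent to a deformation of the form `D ∘ φ` with `φ` analytic, `φ 0 = 0`. -/
def IsVersal [∀ v, Fintype (N v)] [∀ v, DecidableEq (N v)] {ι : Type} [Fintype ι]
    (A : QRep V Arrow src tgt N 𝔽) (D : (ι → 𝔽) → QRep V Arrow src tgt N 𝔽) : Prop :=
  IsDeformation A D ∧
  ∀ (l : ℕ) (B : (Fin l → 𝔽) → QRep V Arrow src tgt N 𝔽), IsDeformation A B →
    ∃ φ : (Fin l → 𝔽) → ι → 𝔽,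
      φ 0 = 0 ∧ (∀ i : ι, AnalyticAt 𝔽 (fun mu => φ mu i) (0 : Fin l → 𝔽)) ∧
      DefEquiv (fun mu => D (φ mu)) B

/-- A deformation is miniversal if it is versal and no versal deformation has
fewer parameters. -/
def IsMiniversal [∀ v, Fintype (N v)] [∀ v, DecidableEq (N v)] {ι : Type} [Fintype ι]
    (A : QRep V Arrow src tgt N 𝔽) (D : (ι → 𝔽) → QRep V Arrow src tgt N 𝔽) : Prop :=
  IsVersal A D ∧
  ∀ (l : ℕ) (B : (Fin l → 𝔽) → QRep V Arrow src tgt N 𝔽),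
    IsVersal A B → Fintype.card ι ≤ l

/-- The elementary representation `E_{αij}`: all matrices are `0` except the one
assigned to `α`, whose `(i,j)` entry is `1`. -/
def elemRep [DecidableEq Arrow] [∀ v, DecidableEq (N v)]
    (x : QIdx V Arrow src tgt N) : QRep V Arrow src tgt N 𝔽 :=
  fun α i j => if (⟨α, (i, j)⟩ : QIdx V Arrow src tgt N) = x then 1 else 0

/-- The subspace `[𝔽^{n×n}, A]` of representations of the form
`α ↦ C (tgt α) * A α − A α * C (src α)`. -/
def bracketSet [∀ v, Fintype (N v)] (A : QRep V Arrow src tgt N 𝔽) :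
    Set (QRep V Arrow src tgt N 𝔽) :=
  {R | ∃ C : ∀ v : V, Matrix (N v) (N v) 𝔽,
    ∀ α, R α = C (tgt α) * A α - A α * C (src α)}

/-- `E_Γ`: the subspace spanned by the elementary representations `E_{αij}`
with `(α,i,j) ∈ Γ`. -/
def eGamma [DecidableEq Arrow] [∀ v, DecidableEq (N v)]
    (Γ : Finset (QIdx V Arrow src tgt N)) : Set (QRep V Arrow src tgt N 𝔽) :=
  (Submodule.span 𝔽 ((elemRep (𝔽 := 𝔽)) '' (↑Γ : Set (QIdx V Arrow src tgt N))) :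
    Submodule 𝔽 (QRep V Arrow src tgt N 𝔽))

/-- Merging the vertices `p₁` and `p₂` into the single vertex `p₁` (as a vertex of the
quiver with vertex set `{v // v ≠ p₂}`). -/
def mergeVert {V : Type} [DecidableEq V] {p₁ p₂ : V} (hne : p₁ ≠ p₂) :
    V → {v : V // v ≠ p₂} :=
  fun v => if h : v = p₂ then ⟨p₁, hne⟩ else ⟨v, h⟩

theorem mergeVert_dim {V : Type} [DecidableEq V] {p₁ p₂ : V} {n : V → ℕ}
    (hne : p₁ ≠ p₂) (hn : n p₁ = n p₂) (v : V) :
    n (mergeVert hne v).1 = n v := by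
  unfold mergeVert
  split
  · next h => rw [hn, h]
  · rfl

namespace QAux

open Matrix Filter

/-! ### Analyticity toolkit for matrix families -/

section MA

variable {𝔽 : Type} [RCLike 𝔽] {ι : Type} [Fintype ι]

/-- Entries of a matrix family are analytic at 0. -/
def MA {m m' : Type} (M : (ι → 𝔽) → Matrix m m' 𝔽) : Prop :=
  ∀ i j, AnalyticAt 𝔽 (fun x => M x i j) (0 : ι → 𝔽)

theorem MA.det {m : Type} [Fintype m] [DecidableEq m]
    {M : (ι → 𝔽) → Matrix m m 𝔽} (h : MA M) :
    AnalyticAt 𝔽 (fun x => (M x).det) (0 : ι → 𝔽) := by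
  have e : (fun x => (M x).det)
      = fun x => ∑ σ : Equiv.Perm m, ((Equiv.Perm.sign σ : ℤ) : 𝔽) * ∏ i, M x (σ i) i := by
    funext x; rw [Matrix.det_apply']
  rw [e]
  exact Finset.analyticAt_fun_sum _ fun σ _ =>
    analyticAt_const.mul (Finset.analyticAt_fun_prod _ fun i _ => h _ _)

theorem MA.mul {m m' m'' : Type} [Fintype m']
    {M : (ι → 𝔽) → Matrix m m' 𝔽} {N : (ι → 𝔽) → Matrix m' m'' 𝔽}
    (hM : MA M) (hN : MA N) : MA (fun x => M x * N x) := by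
  intro i j
  have e : (fun x => (M x * N x) i j) = fun x => ∑ k, M x i k * N x k j := by
    funext x; rw [Matrix.mul_apply]
  rw [e]
  exact Finset.analyticAt_fun_sum _ fun k _ => (hM i k).mul (hN k j)

theorem MA.adjugate {m : Type} [Fintype m] [DecidableEq m]
    {M : (ι → 𝔽) → Matrix m m 𝔽} (h : MA M) : MA (fun x => (M x).adjugate) := by
  intro i j
  have e : (fun x => (M x).adjugate i j)
      = fun x => ((M x).updateRow j (Pi.single i 1)).det := by
    funext x; rw [Matrix.adjugate_apply]
  rw [e]
  refine MA.det ?_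
  intro a b
  by_cases hab : a = j
  · simpa [Matrix.updateRow_apply, hab] using analyticAt_const
  · simpa [Matrix.updateRow_apply, hab] using h a b

theorem MA.detConst {m : Type} [Fintype m] [DecidableEq m]
    {M : (ι → 𝔽) → Matrix m m 𝔽} (h : MA M) (h0 : (M 0).det ≠ 0) :
    ∀ᶠ x in nhds (0 : ι → 𝔽), IsUnit (M x).det := by
  filter_upwards [(h.det.continuousAt).eventually_ne h0] with x hx
  exact isUnit_iff_ne_zero.2 hx

theorem MA.inv {m : Type} [Fintype m] [DecidableEq m]
    {M : (ι → 𝔽) → Matrix m m 𝔽} (h : MA M) (h0 : (M 0).det ≠ 0) :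
    MA (fun x => (M x)⁻¹) := by
  intro i j
  have e : (fun x => (M x)⁻¹ i j) = fun x => ((M x).det)⁻¹ * (M x).adjugate i j := by
    funext x
    rw [Matrix.inv_def, Matrix.smul_apply, Ring.inverse_eq_inv', smul_eq_mul]
  rw [e]
  exact ((h.det).inv h0).mul (h.adjugate i j)

theorem MA.ev_unit {m : Type} [Fintype m] [DecidableEq m]
    {M : (ι → 𝔽) → Matrix m m 𝔽} (h : MA M) (h0 : M 0 = 1) :
    ∀ᶠ μ in nhds (0 : ι → 𝔽), IsUnit (M μ).det :=
  h.detConst (by rw [h0, Matrix.det_one]; exact one_ne_zero)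

end MA

/-! ### Cast-identity matrices -/

section CM

variable {𝔽 : Type} [RCLike 𝔽]

theorem fin_cast_self {a : ℕ} (h : a = a) (i : Fin a) : Fin.cast h i = i := rfl

theorem fin_cast_cast {a b c : ℕ} (h : a = b) (h' : b = c) (i : Fin a) :
    Fin.cast h' (Fin.cast h i) = Fin.cast (h.trans h') i := rfl

theorem coe_finCongr {a b : ℕ} (h : a = b) : ⇑(finCongr h) = Fin.cast h := rfl

/-- The "cast identity" rectangular matrix. -/
def cm (𝔽 : Type) [RCLike 𝔽] (a b : ℕ) : Matrix (Fin a) (Fin b) 𝔽 :=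
  fun i j => if (i : ℕ) = (j : ℕ) then 1 else 0

theorem cm_mul {a b : ℕ} (h : a = b) {m : Type} [Fintype m] (M : Matrix (Fin b) m 𝔽) :
    cm 𝔽 a b * M = M.submatrix (Fin.cast h) id := by
  ext i j
  rw [Matrix.mul_apply, Finset.sum_eq_single (Fin.cast h i)]
  · simp [cm]
  · intro k _ hk
    have : (i : ℕ) ≠ (k : ℕ) := by
      intro hik; exact hk (by apply Fin.ext; simp [← hik])
    simp [cm, this]
  · intro hk; exact absurd (Finset.mem_univ _) hk

theorem mul_cm {a b : ℕ} (h : a = b) {m : Type} [Fintype m] (M : Matrix m (Fin a) 𝔽) :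
    M * cm 𝔽 a b = M.submatrix id (Fin.cast h.symm) := by
  ext i j
  rw [Matrix.mul_apply, Finset.sum_eq_single (Fin.cast h.symm j)]
  · simp [cm]
  · intro k _ hk
    have : (k : ℕ) ≠ (j : ℕ) := by
      intro hkj; exact hk (by apply Fin.ext; simp [hkj])
    simp [cm, this]
  · intro hk; exact absurd (Finset.mem_univ _) hk

theorem cm_cm {a b : ℕ} (h : a = b) : cm 𝔽 a b * cm 𝔽 b a = 1 := by
  rw [cm_mul h]
  ext i j
  simp [cm, Matrix.one_apply, Fin.ext_iff]

theorem one_submatrix_cast {a b : ℕ} (h h' : a = b) :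
    (1 : Matrix (Fin b) (Fin b) 𝔽).submatrix (Fin.cast h) (Fin.cast h') = 1 := by
  ext i j
  simp [Matrix.one_apply, Fin.ext_iff]

theorem sub_sub_cancel {a b a' b' : ℕ} (ea : a' = a) (eb : b' = b)
    (M : Matrix (Fin a) (Fin b) 𝔽) :
    (M.submatrix (⇑(finCongr ea)) (⇑(finCongr eb))).submatrix
      (⇑(finCongr ea.symm)) (⇑(finCongr eb.symm)) = M := by
  ext i j; simp

theorem sub_mul_sub {p q r p' q' r' : ℕ} (hp : p' = p) (hq : q' = q) (hr : r' = r)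
    (M : Matrix (Fin p) (Fin q) 𝔽) (N : Matrix (Fin q) (Fin r) 𝔽) :
    M.submatrix (⇑(finCongr hp)) (⇑(finCongr hq)) * N.submatrix (⇑(finCongr hq)) (⇑(finCongr hr))
      = (M * N).submatrix (⇑(finCongr hp)) (⇑(finCongr hr)) :=
  Matrix.submatrix_mul_equiv M N _ (finCongr hq) _

theorem key1 {a b a' b' : ℕ} (ea : a' = a) (eb : b' = b)
    (P : Matrix (Fin a) (Fin a) 𝔽) (Q : Matrix (Fin b) (Fin b) 𝔽)
    (X : Matrix (Fin a) (Fin b) 𝔽)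
    (It : Matrix (Fin a') (Fin a') 𝔽) (Is : Matrix (Fin b') (Fin b') 𝔽)
    (Dm : Matrix (Fin a') (Fin b') 𝔽)
    (hP : IsUnit P.det) (hQ : IsUnit Q.det)
    (h1 : (P * X * Q⁻¹).submatrix (⇑(finCongr ea)) (⇑(finCongr eb)) = It * Dm * Is⁻¹) :
    X = P⁻¹ * It.submatrix (⇑(finCongr ea.symm)) (⇑(finCongr ea.symm)) *
        Dm.submatrix (⇑(finCongr ea.symm)) (⇑(finCongr eb.symm)) *
        (Q⁻¹ * Is.submatrix (⇑(finCongr eb.symm)) (⇑(finCongr eb.symm)))⁻¹ := by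
  have h2 : P * X * Q⁻¹ = (It * Dm * Is⁻¹).submatrix (⇑(finCongr ea.symm)) (⇑(finCongr eb.symm)) := by
    rw [← h1]; exact (sub_sub_cancel ea eb _).symm
  have h3 : (It * Dm * Is⁻¹).submatrix (⇑(finCongr ea.symm)) (⇑(finCongr eb.symm)) =
      It.submatrix (⇑(finCongr ea.symm)) (⇑(finCongr ea.symm)) *
      Dm.submatrix (⇑(finCongr ea.symm)) (⇑(finCongr eb.symm)) *
      (Is⁻¹).submatrix (⇑(finCongr eb.symm)) (⇑(finCongr eb.symm)) := by
    rw [sub_mul_sub ea.symm ea.symm eb.symm It Dm,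
        sub_mul_sub ea.symm eb.symm eb.symm (It * Dm) Is⁻¹]
  rw [Matrix.mul_inv_rev, Matrix.nonsing_inv_nonsing_inv _ hQ, Matrix.inv_submatrix_equiv]
  have h5 : P⁻¹ * (P * X * Q⁻¹) * Q = X := by
    rw [Matrix.mul_assoc P X Q⁻¹, Matrix.nonsing_inv_mul_cancel_left _ _ hP,
        Matrix.nonsing_inv_mul_cancel_right _ _ hQ]
  have h6 := h5.symm.trans (by rw [h2, h3])
  rw [h6]
  simp only [Matrix.mul_assoc, finCongr_symm]

theorem key2 {a b a' b' : ℕ} (ea : a' = a) (eb : b' = b)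
    (It' : Matrix (Fin a') (Fin a') 𝔽) (Is' : Matrix (Fin b') (Fin b') 𝔽)
    (Qt : Matrix (Fin a) (Fin a) 𝔽) (Qs : Matrix (Fin b) (Fin b) 𝔽)
    (X : Matrix (Fin a) (Fin b) 𝔽) (Ct' : Matrix (Fin a') (Fin b') 𝔽)
    (h1 : Ct'.submatrix (⇑(finCongr ea.symm)) (⇑(finCongr eb.symm)) =
      It'.submatrix (⇑(finCongr ea.symm)) (⇑(finCongr ea.symm)) * Qt * X *
      (Is'.submatrix (⇑(finCongr eb.symm)) (⇑(finCongr eb.symm)) * Qs)⁻¹) :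
    Ct' = It' * (Qt * X * Qs⁻¹).submatrix (⇑(finCongr ea)) (⇑(finCongr eb)) * Is'⁻¹ := by
  have h2 : Ct' = (It'.submatrix (⇑(finCongr ea.symm)) (⇑(finCongr ea.symm)) * Qt * X *
      (Is'.submatrix (⇑(finCongr eb.symm)) (⇑(finCongr eb.symm)) * Qs)⁻¹).submatrix
      (⇑(finCongr ea)) (⇑(finCongr eb)) := by
    rw [← h1]; ext i j; simp
  have e1 : It' = (It'.submatrix (⇑(finCongr ea.symm)) (⇑(finCongr ea.symm))).submatrix
      (⇑(finCongr ea)) (⇑(finCongr ea)) := by ext i j; simp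
  have e2 : Is'⁻¹ = ((Is'⁻¹).submatrix (⇑(finCongr eb.symm)) (⇑(finCongr eb.symm))).submatrix
      (⇑(finCongr eb)) (⇑(finCongr eb)) := by ext i j; simp
  conv_lhs => rw [h2]
  conv_rhs => rw [e1, e2]
  rw [sub_mul_sub ea ea eb, sub_mul_sub ea eb eb]
  rw [Matrix.mul_inv_rev, Matrix.inv_submatrix_equiv]
  simp only [Matrix.mul_assoc, finCongr_symm]

end CM

/-! ### The normalization and extension constructions -/

section Defs

variable {V Arrow : Type} [DecidableEq V] [DecidableEq Arrow]
  {src tgt : Arrow → V} {n : V → ℕ} {𝔽 : Type} [RCLike 𝔽] {α₀ : Arrow}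

/-- Extend a representation-family on the merged quiver to the original quiver,
assigning the cast-identity to `α₀`. -/
def extRep (hne : src α₀ ≠ tgt α₀) (hn : n (src α₀) = n (tgt α₀)) {ι : Type}
    (C' : (ι → 𝔽) → QRep {v : V // v ≠ tgt α₀} {β : Arrow // β ≠ α₀}
      (fun β => mergeVert hne (src β.1)) (fun β => mergeVert hne (tgt β.1))
      (fun v' => Fin (n v'.1)) 𝔽) :
    (ι → 𝔽) → QRep V Arrow src tgt (fun v => Fin (n v)) 𝔽 :=
  fun lam β => Matrix.of fun i j =>
    if h : β = α₀ then (if (i : ℕ) = (j : ℕ) then (1 : 𝔽) else 0)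
    else C' lam ⟨β, h⟩ (Fin.cast (mergeVert_dim hne hn (tgt β)).symm i)
      (Fin.cast (mergeVert_dim hne hn (src β)).symm j)

/-- The square matrix `S_B(μ) = B_μ(α₀) · J⁻¹`. -/
noncomputable def Sq (α₀ : Arrow) {ι : Type}
    (B : (ι → 𝔽) → QRep V Arrow src tgt (fun v => Fin (n v)) 𝔽)
    (μ : ι → 𝔽) : Matrix (Fin (n (tgt α₀))) (Fin (n (tgt α₀))) 𝔽 :=
  B μ α₀ * cm 𝔽 (n (src α₀)) (n (tgt α₀))

/-- The normalizing family of matrices: `S⁻¹` (transported) at `tgt α₀` and `1` elsewhere. -/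
noncomputable def Pm (α₀ : Arrow) {ι : Type}
    (B : (ι → 𝔽) → QRep V Arrow src tgt (fun v => Fin (n v)) 𝔽)
    (v : V) (μ : ι → 𝔽) : Matrix (Fin (n v)) (Fin (n v)) 𝔽 :=
  if h : v = tgt α₀ then
    ((Sq α₀ B μ)⁻¹).submatrix (Fin.cast (congrArg n h)) (Fin.cast (congrArg n h))
  else 1

/-- The normalized family of representations on the merged quiver. -/
noncomputable def normRep (hne : src α₀ ≠ tgt α₀) (hn : n (src α₀) = n (tgt α₀)) {ι : Type}
    (B : (ι → 𝔽) → QRep V Arrow src tgt (fun v => Fin (n v)) 𝔽) :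
    (ι → 𝔽) → QRep {v : V // v ≠ tgt α₀} {β : Arrow // β ≠ α₀}
      (fun β => mergeVert hne (src β.1)) (fun β => mergeVert hne (tgt β.1))
      (fun v' => Fin (n v'.1)) 𝔽 :=
  fun μ β => (Pm α₀ B (tgt β.1) μ * B μ β.1 * (Pm α₀ B (src β.1) μ)⁻¹).submatrix
      (Fin.cast (mergeVert_dim hne hn (tgt β.1))) (Fin.cast (mergeVert_dim hne hn (src β.1)))

end Defs

/-! ### Lemmas about the constructions -/

section QLemmas

variable {V Arrow : Type} [DecidableEq V] [DecidableEq Arrow]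
  {src tgt : Arrow → V} {n : V → ℕ} {𝔽 : Type} [RCLike 𝔽] {α₀ : Arrow}
  {ι : Type} [Fintype ι]
  {A : QRep V Arrow src tgt (fun v => Fin (n v)) 𝔽}
  {B : (ι → 𝔽) → QRep V Arrow src tgt (fun v => Fin (n v)) 𝔽}

theorem A0_cm (hA₀ : ∀ i j, A α₀ i j = if (i : ℕ) = (j : ℕ) then (1 : 𝔽) else 0) :
    A α₀ = cm 𝔽 (n (tgt α₀)) (n (src α₀)) := by
  ext i j; rw [hA₀]; rfl

theorem Sq_zero (hn : n (src α₀) = n (tgt α₀))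
    (hA₀ : ∀ i j, A α₀ i j = if (i : ℕ) = (j : ℕ) then (1 : 𝔽) else 0)
    (hB : IsDeformation A B) : Sq α₀ B 0 = 1 := by
  unfold Sq; rw [hB.1, A0_cm hA₀, cm_cm hn.symm]

theorem Sq_MA (hB : IsDeformation A B) : MA (Sq α₀ B) :=
  MA.mul (hB.2 α₀) (fun _ _ => analyticAt_const)

theorem Sq_ev (hn : n (src α₀) = n (tgt α₀))
    (hA₀ : ∀ i j, A α₀ i j = if (i : ℕ) = (j : ℕ) then (1 : 𝔽) else 0)
    (hB : IsDeformation A B) : ∀ᶠ μ in nhds (0 : ι → 𝔽), IsUnit (Sq α₀ B μ).det :=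
  MA.detConst (Sq_MA hB) (by rw [Sq_zero hn hA₀ hB, Matrix.det_one]; exact one_ne_zero)

theorem Pm_zero (hn : n (src α₀) = n (tgt α₀))
    (hA₀ : ∀ i j, A α₀ i j = if (i : ℕ) = (j : ℕ) then (1 : 𝔽) else 0)
    (hB : IsDeformation A B) (v : V) : Pm α₀ B v 0 = 1 := by
  unfold Pm; split
  · rw [Sq_zero hn hA₀ hB, inv_one, one_submatrix_cast]
  · rfl

theorem Pm_MA (hn : n (src α₀) = n (tgt α₀))
    (hA₀ : ∀ i j, A α₀ i j = if (i : ℕ) = (j : ℕ) then (1 : 𝔽) else 0)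
    (hB : IsDeformation A B) (v : V) : MA (Pm α₀ B v) := by
  intro i j
  by_cases h : v = tgt α₀
  · simp only [Pm, dif_pos h]
    exact (MA.inv (Sq_MA hB)
      (by rw [Sq_zero hn hA₀ hB, Matrix.det_one]; exact one_ne_zero)) _ _
  · simp only [Pm, dif_neg h]
    exact analyticAt_const

theorem Pm_ev (hn : n (src α₀) = n (tgt α₀))
    (hA₀ : ∀ i j, A α₀ i j = if (i : ℕ) = (j : ℕ) then (1 : 𝔽) else 0)
    (hB : IsDeformation A B) (v : V) :
    ∀ᶠ μ in nhds (0 : ι → 𝔽), IsUnit (Pm α₀ B v μ).det := by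
  by_cases h : v = tgt α₀
  · filter_upwards [Sq_ev hn hA₀ hB] with μ hμ
    unfold Pm; rw [dif_pos h]
    have e : ((Sq α₀ B μ)⁻¹).submatrix (Fin.cast (congrArg n h)) (Fin.cast (congrArg n h))
        = ((Sq α₀ B μ)⁻¹).submatrix (⇑(finCongr (congrArg n h))) (⇑(finCongr (congrArg n h))) := rfl
    rw [e, Matrix.det_submatrix_equiv_self]
    exact Matrix.isUnit_nonsing_inv_det _ hμ
  · simp only [Pm, dif_neg h]
    exact Filter.Eventually.of_forall (fun μ => by simp)

theorem Pm_tgt (μ : ι → 𝔽) : Pm α₀ B (tgt α₀) μ = (Sq α₀ B μ)⁻¹ := by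
  unfold Pm; rw [dif_pos rfl]
  ext i j
  show ((Sq α₀ B μ)⁻¹) _ _ = _
  rw [fin_cast_self, fin_cast_self]

theorem Pm_src (hne : src α₀ ≠ tgt α₀) (μ : ι → 𝔽) : Pm α₀ B (src α₀) μ = 1 := by
  unfold Pm; rw [dif_neg hne]

theorem normRep_isDef (hne : src α₀ ≠ tgt α₀) (hn : n (src α₀) = n (tgt α₀))
    (hA₀ : ∀ i j, A α₀ i j = if (i : ℕ) = (j : ℕ) then (1 : 𝔽) else 0)
    {A' : QRep {v : V // v ≠ tgt α₀} {β : Arrow // β ≠ α₀}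
      (fun β => mergeVert hne (src β.1)) (fun β => mergeVert hne (tgt β.1))
      (fun v' => Fin (n v'.1)) 𝔽}
    (hA' : A' = fun β : {β : Arrow // β ≠ α₀} => (A β.1).submatrix
      (Fin.cast (mergeVert_dim hne hn (tgt β.1)))
      (Fin.cast (mergeVert_dim hne hn (src β.1))))
    (hB : IsDeformation A B) : IsDeformation A' (normRep hne hn B) := by
  constructor
  · funext β
    show (Pm α₀ B (tgt β.1) 0 * B 0 β.1 * (Pm α₀ B (src β.1) 0)⁻¹).submatrix _ _ = A' β
    rw [Pm_zero hn hA₀ hB, Pm_zero hn hA₀ hB, inv_one, Matrix.mul_one, Matrix.one_mul, hB.1, hA']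
  · intro β i j
    have hMA : MA (fun μ => Pm α₀ B (tgt β.1) μ * B μ β.1 * (Pm α₀ B (src β.1) μ)⁻¹) :=
      MA.mul (MA.mul (Pm_MA hn hA₀ hB _) (hB.2 β.1))
        (MA.inv (Pm_MA hn hA₀ hB _)
          (by rw [Pm_zero hn hA₀ hB, Matrix.det_one]; exact one_ne_zero))
    exact hMA _ _

theorem extRep_isDef (hne : src α₀ ≠ tgt α₀) (hn : n (src α₀) = n (tgt α₀))
    (hA₀ : ∀ i j, A α₀ i j = if (i : ℕ) = (j : ℕ) then (1 : 𝔽) else 0)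
    {A' : QRep {v : V // v ≠ tgt α₀} {β : Arrow // β ≠ α₀}
      (fun β => mergeVert hne (src β.1)) (fun β => mergeVert hne (tgt β.1))
      (fun v' => Fin (n v'.1)) 𝔽}
    (hA' : A' = fun β : {β : Arrow // β ≠ α₀} => (A β.1).submatrix
      (Fin.cast (mergeVert_dim hne hn (tgt β.1)))
      (Fin.cast (mergeVert_dim hne hn (src β.1))))
    {C' : (ι → 𝔽) → QRep {v : V // v ≠ tgt α₀} {β : Arrow // β ≠ α₀}
      (fun β => mergeVert hne (src β.1)) (fun β => mergeVert hne (tgt β.1))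
      (fun v' => Fin (n v'.1)) 𝔽}
    (hC' : IsDeformation A' C') : IsDeformation A (extRep hne hn C') := by
  constructor
  · funext β
    ext i j
    simp only [extRep, Matrix.of_apply]
    by_cases h : β = α₀
    · subst h; rw [dif_pos rfl, hA₀]
    · rw [dif_neg h, hC'.1, hA']
      show (A β).submatrix _ _ _ _ = _
      simp only [Matrix.submatrix_apply, fin_cast_cast, fin_cast_self]
  · intro β i j
    by_cases h : β = α₀
    · simp only [extRep, Matrix.of_apply, dif_pos h]; exact analyticAt_const
    · simp only [extRep, Matrix.of_apply, dif_neg h]; exact hC'.2 _ _ _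

end QLemmas

end QAux


/-- **Lemma 5.** Let `A` be a representation of a quiver `Q` such that `A α₀` is an
identity matrix for some arrow `α₀ : p₁ → p₂` with `p₁ ≠ p₂`. Let `Q'` be the quiver
obtained from `Q` by removing `α₀` and merging `p₁` and `p₂` into a single vertex, and
let `A'` be the representation of `Q'` obtained from `A` by removing `A α₀`. Then every
miniversal deformation of `A'` extends, by assigning the identity matrix to `α₀`, to a
miniversal deformation of `A`. -/
theorem miniversal_of_merged_quiver
    {V Arrow : Type} [DecidableEq V] [DecidableEq Arrow]
    {src tgt : Arrow → V} {n : V → ℕ} {𝔽 : Type} [RCLike 𝔽]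
    (A : QRep V Arrow src tgt (fun v => Fin (n v)) 𝔽)
    (α₀ : Arrow) (p₁ p₂ : V)
    (hsrc : src α₀ = p₁) (htgt : tgt α₀ = p₂) (hne : p₁ ≠ p₂)
    (hn : n p₁ = n p₂)
    -- `A α₀` is the identity matrix
    (hA₀ : ∀ i j, A α₀ i j = if (i : ℕ) = (j : ℕ) then (1 : 𝔽) else 0)
    -- the representation `A'` of the merged quiver `Q'` obtained by removing `A α₀`
    (A' : QRep {v : V // v ≠ p₂} {β : Arrow // β ≠ α₀}
      (fun β => mergeVert hne (src β.1)) (fun β => mergeVert hne (tgt β.1))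
      (fun v' => Fin (n v'.1)) 𝔽)
    (hA' : A' = fun β : {β : Arrow // β ≠ α₀} => (A β.1).submatrix
      (Fin.cast (mergeVert_dim hne hn (tgt β.1)))
      (Fin.cast (mergeVert_dim hne hn (src β.1))))
    -- a miniversal deformation of `A'`
    {k : ℕ}
    (D' : (Fin k → 𝔽) → QRep {v : V // v ≠ p₂} {β : Arrow // β ≠ α₀}
      (fun β => mergeVert hne (src β.1)) (fun β => mergeVert hne (tgt β.1))
      (fun v' => Fin (n v'.1)) 𝔽)
    (hD' : IsMiniversal A' D')
    -- its extension to `Q`, assigning the identity matrix to `α₀`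
    (D : (Fin k → 𝔽) → QRep V Arrow src tgt (fun v => Fin (n v)) 𝔽)
    (hD : D = fun (lam : Fin k → 𝔽) (β : Arrow) => Matrix.of fun (i : Fin (n (tgt β))) (j : Fin (n (src β))) =>
      if h : β = α₀ then (if (i : ℕ) = (j : ℕ) then (1 : 𝔽) else 0)
      else D' lam ⟨β, h⟩
        (Fin.cast (mergeVert_dim hne hn (tgt β)).symm i)
        (Fin.cast (mergeVert_dim hne hn (src β)).symm j)) :
    IsMiniversal A D := by
  subst hsrc
  subst htgt
  rw [show D = QAux.extRep hne hn D' from hD]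
  constructor
  · constructor
    · exact QAux.extRep_isDef hne hn hA₀ hA' hD'.1.1
    · -- versality
      intro l B hB
      obtain ⟨φ, hφ0, hφa, I', hI'0, hI'a, hI'eq⟩ :=
        hD'.1.2 l (QAux.normRep hne hn B) (QAux.normRep_isDef hne hn hA₀ hA' hB)
      refine ⟨φ, hφ0, hφa, ?_⟩
      refine ⟨fun v μ => (QAux.Pm α₀ B v μ)⁻¹ *
        (I' (mergeVert hne v) μ).submatrix
          (Fin.cast (mergeVert_dim hne hn v).symm)
          (Fin.cast (mergeVert_dim hne hn v).symm), ?_, ?_, ?_⟩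
      · intro v
        show (QAux.Pm α₀ B v 0)⁻¹ *
          (I' (mergeVert hne v) 0).submatrix
            (Fin.cast (mergeVert_dim hne hn v).symm)
            (Fin.cast (mergeVert_dim hne hn v).symm) = 1
        rw [QAux.Pm_zero hn hA₀ hB, inv_one, Matrix.one_mul, hI'0,
          QAux.one_submatrix_cast]
      · intro v i j
        exact (QAux.MA.mul
          (QAux.MA.inv (QAux.Pm_MA hn hA₀ hB v)
            (by rw [QAux.Pm_zero hn hA₀ hB, Matrix.det_one]; exact one_ne_zero))
          (fun a b => hI'a (mergeVert hne v) _ _)) i j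
      · intro α
        by_cases hα : α = α₀
        · subst hα
          have hmt : mergeVert hne (tgt α) = ⟨src α, hne⟩ := dif_pos rfl
          have hms : mergeVert hne (src α) = ⟨src α, hne⟩ := dif_neg hne
          have dceq : ∀ (c c' : {v : V // v ≠ tgt α}) (h : c = c') (μ : Fin l → 𝔽)
              (i j : Fin (n c.1)), I' c μ i j
                = I' c' μ (Fin.cast (congrArg (fun x => n x.1) h) i)
                    (Fin.cast (congrArg (fun x => n x.1) h) j) := by
            intro c c' h μ i j; subst h; rfl
          have hcomm : ∀ μ : Fin l → 𝔽,
              (I' (mergeVert hne (tgt α)) μ).submatrix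
                  (Fin.cast (mergeVert_dim hne hn (tgt α)).symm)
                  (Fin.cast (mergeVert_dim hne hn (tgt α)).symm)
                * QAux.cm 𝔽 (n (tgt α)) (n (src α))
              = QAux.cm 𝔽 (n (tgt α)) (n (src α)) *
                (I' (mergeVert hne (src α)) μ).submatrix
                  (Fin.cast (mergeVert_dim hne hn (src α)).symm)
                  (Fin.cast (mergeVert_dim hne hn (src α)).symm) := by
            intro μ
            rw [QAux.mul_cm hn.symm, QAux.cm_mul hn.symm]
            ext i j
            simp only [Matrix.submatrix_apply, id_eq]
            rw [dceq _ _ hmt μ, dceq _ _ hms μ]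
            rfl
          filter_upwards [QAux.Sq_ev hn hA₀ hB,
            QAux.MA.ev_unit (fun i j => hI'a (mergeVert hne (src α)) i j) (hI'0 _)]
            with μ hU hIs
          have eJ : QAux.extRep hne hn D' (φ μ) α = QAux.cm 𝔽 (n (tgt α)) (n (src α)) := by
            ext i j
            simp only [QAux.extRep, Matrix.of_apply, dif_pos rfl]
            rfl
          have hIs' : IsUnit ((I' (mergeVert hne (src α)) μ).submatrix
              (Fin.cast (mergeVert_dim hne hn (src α)).symm)
              (Fin.cast (mergeVert_dim hne hn (src α)).symm)).det := by
            rw [show (Fin.cast (mergeVert_dim hne hn (src α)).symm : Fin _ → Fin _)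
                = ⇑(finCongr (mergeVert_dim hne hn (src α)).symm) from rfl,
              Matrix.det_submatrix_equiv_self]
            exact hIs
          have final : B μ α =
              (QAux.Pm α B (tgt α) μ)⁻¹ *
                (I' (mergeVert hne (tgt α)) μ).submatrix
                  (Fin.cast (mergeVert_dim hne hn (tgt α)).symm)
                  (Fin.cast (mergeVert_dim hne hn (tgt α)).symm) *
                QAux.extRep hne hn D' (φ μ) α *
              ((QAux.Pm α B (src α) μ)⁻¹ *
                (I' (mergeVert hne (src α)) μ).submatrix
                  (Fin.cast (mergeVert_dim hne hn (src α)).symm)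
                  (Fin.cast (mergeVert_dim hne hn (src α)).symm))⁻¹ := by
            rw [eJ, QAux.Pm_tgt, QAux.Pm_src hne, inv_one, Matrix.one_mul,
                Matrix.nonsing_inv_nonsing_inv _ hU]
            rw [Matrix.mul_assoc (QAux.Sq α B μ), hcomm μ,
                ← Matrix.mul_assoc (QAux.Sq α B μ)]
            rw [Matrix.mul_nonsing_inv_cancel_right _ _ hIs']
            show B μ α = B μ α * QAux.cm 𝔽 (n (src α)) (n (tgt α)) *
              QAux.cm 𝔽 (n (tgt α)) (n (src α))
            rw [Matrix.mul_assoc, QAux.cm_cm hn, Matrix.mul_one]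
          exact final
        · filter_upwards [hI'eq ⟨α, hα⟩, QAux.Pm_ev hn hA₀ hB (tgt α),
            QAux.Pm_ev hn hA₀ hB (src α)] with μ h1 hPt hPs
          have e1 : QAux.extRep hne hn D' (φ μ) α = (D' (φ μ) ⟨α, hα⟩).submatrix
              (⇑(finCongr (mergeVert_dim hne hn (tgt α)).symm))
              (⇑(finCongr (mergeVert_dim hne hn (src α)).symm)) := by
            ext i j
            simp only [QAux.extRep, Matrix.of_apply, dif_neg hα, Matrix.submatrix_apply]
            rfl
          have hk := QAux.key1 (mergeVert_dim hne hn (tgt α)) (mergeVert_dim hne hn (src α))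
            (QAux.Pm α₀ B (tgt α) μ) (QAux.Pm α₀ B (src α) μ) (B μ α)
            (I' (mergeVert hne (tgt α)) μ) (I' (mergeVert hne (src α)) μ)
            (D' (φ μ) ⟨α, hα⟩) hPt hPs h1
          rw [← e1] at hk
          exact hk
  · -- minimality
    intro l B hB
    refine hD'.2 l (QAux.normRep hne hn B) ⟨QAux.normRep_isDef hne hn hA₀ hA' hB.1, ?_⟩
    intro l' C' hC'
    obtain ⟨φ, hφ0, hφa, I, hI0, hIa, hIeq⟩ :=
      hB.2 l' (QAux.extRep hne hn C') (QAux.extRep_isDef hne hn hA₀ hA' hC')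
    refine ⟨φ, hφ0, hφa, fun v' μ => I v'.1 μ, fun v' => hI0 v'.1,
      fun v' i j => hIa v'.1 i j, ?_⟩
    have hmt : mergeVert hne (tgt α₀) = ⟨src α₀, hne⟩ := dif_pos rfl
    have hmt1 : (mergeVert hne (tgt α₀)).1 = src α₀ := by rw [hmt]
    have dceqV : ∀ (c c' : V) (h : c = c') (μ : Fin l' → 𝔽) (i j : Fin (n c)),
        I c μ i j = I c' μ (Fin.cast (congrArg n h) i) (Fin.cast (congrArg n h) j) := by
      intro c c' h μ i j; subst h; rfl
    have hφc : ContinuousAt φ 0 := by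
      apply continuousAt_pi.mpr
      intro i; exact (hφa i).continuousAt
    have hTev : ∀ᶠ μ in nhds (0 : Fin l' → 𝔽), IsUnit (QAux.Sq α₀ B (φ μ)).det := by
      have hdet : ContinuousAt (fun x => (QAux.Sq α₀ B x).det) (φ 0) := by
        rw [hφ0]; exact (QAux.MA.det (QAux.Sq_MA hB.1)).continuousAt
      have h0 : (QAux.Sq α₀ B (φ 0)).det ≠ 0 := by
        rw [hφ0, QAux.Sq_zero hn hA₀ hB.1, Matrix.det_one]; exact one_ne_zero
      filter_upwards [(hdet.comp hφc).eventually_ne h0] with μ hμ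
      exact isUnit_iff_ne_zero.2 hμ
    have hIsev : ∀ᶠ μ in nhds (0 : Fin l' → 𝔽), IsUnit (I (src α₀) μ).det :=
      QAux.MA.ev_unit (fun i j => hIa (src α₀) i j) (hI0 _)
    have claim : ∀ v : V, ∀ᶠ μ in nhds (0 : Fin l' → 𝔽),
        (I (mergeVert hne v).1 μ).submatrix
          (Fin.cast (mergeVert_dim hne hn v).symm)
          (Fin.cast (mergeVert_dim hne hn v).symm) * QAux.Pm α₀ B v (φ μ) = I v μ := by
      intro v
      by_cases hv : v = tgt α₀
      · subst hv
        filter_upwards [hIeq α₀, hTev, hIsev] with μ h0 hT hIs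
        have hcm : QAux.cm 𝔽 (n (tgt α₀)) (n (src α₀))
            = I (tgt α₀) μ * B (φ μ) α₀ * (I (src α₀) μ)⁻¹ := by
          rw [← h0]
          ext i j
          simp only [QAux.extRep, Matrix.of_apply, dif_pos rfl]
          rfl
        have hIB : QAux.cm 𝔽 (n (tgt α₀)) (n (src α₀)) * I (src α₀) μ
            = I (tgt α₀) μ * B (φ μ) α₀ := by
          rw [hcm, Matrix.nonsing_inv_mul_cancel_right _ _ hIs]
        rw [QAux.Pm_tgt]
        have hI2 : (I (mergeVert hne (tgt α₀)).1 μ).submatrix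
            (Fin.cast (mergeVert_dim hne hn (tgt α₀)).symm)
            (Fin.cast (mergeVert_dim hne hn (tgt α₀)).symm)
            = QAux.cm 𝔽 (n (tgt α₀)) (n (src α₀)) * I (src α₀) μ *
              QAux.cm 𝔽 (n (src α₀)) (n (tgt α₀)) := by
          rw [QAux.cm_mul hn.symm, QAux.mul_cm hn]
          ext i j
          simp only [Matrix.submatrix_apply, id_eq]
          rw [dceqV _ _ hmt1 μ]
          rfl
        rw [hI2, hIB, Matrix.mul_assoc (I (tgt α₀) μ)]
        show I (tgt α₀) μ * QAux.Sq α₀ B (φ μ) * (QAux.Sq α₀ B (φ μ))⁻¹ = I (tgt α₀) μ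
        exact Matrix.mul_nonsing_inv_cancel_right _ _ hT
      · apply Filter.Eventually.of_forall
        intro μ
        have h1v : (mergeVert hne v).1 = v := by simp [mergeVert, hv]
        have hp : QAux.Pm α₀ B v (φ μ) = 1 := by unfold QAux.Pm; rw [dif_neg hv]
        rw [hp, Matrix.mul_one]
        ext i j
        simp only [Matrix.submatrix_apply]
        rw [dceqV _ _ h1v μ]
        rfl
    intro β
    filter_upwards [hIeq β.1, claim (tgt β.1), claim (src β.1)] with μ h1 ht hs
    have hC : QAux.extRep hne hn C' μ β.1 = (C' μ β).submatrix
        (⇑(finCongr (mergeVert_dim hne hn (tgt β.1)).symm))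
        (⇑(finCongr (mergeVert_dim hne hn (src β.1)).symm)) := by
      ext i j
      simp only [QAux.extRep, Matrix.of_apply, dif_neg β.2, Matrix.submatrix_apply]
      rfl
    rw [hC, ← ht, ← hs] at h1
    exact QAux.key2 (mergeVert_dim hne hn (tgt β.1)) (mergeVert_dim hne hn (src β.1))
      (I (mergeVert hne (tgt β.1)).1 μ) (I (mergeVert hne (src β.1)).1 μ)
      (QAux.Pm α₀ B (tgt β.1) (φ μ)) (QAux.Pm α₀ B (src β.1) (φ μ))
      (B (φ μ) β.1) (C' μ β) h1
end

section
/- Let Q be the quiver 1 — 2 — ⋯ — t with an arbitrary orientation of its arrows, over 𝔽 (ℝ or ℂ), and let p ≤ q < s. Then the one-parameter deformation A(λ) of A = L_{pq} ⊕ L_{q+1,s} obtained from A by replacing the zero 1×1 matrix assigned to the arrow connecting q and q+1 by the 1×1 matrix [λ] (all other matrices of A unchanged) is a miniversal deformation of A. -/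
open Matrix Filter Pointwise

variable {V Arrow : Type} {src tgt : Arrow → V} {N : V → Type} {𝔽 : Type} [RCLike 𝔽]

section Chain

variable {t : ℕ}

/-- The endpoint `i` of the arrow `α_i` of the chain quiver `1 — 2 — ⋯ — t`
(vertices are numbered `0, …, t-1` here). -/
def chainLow (i : Fin (t - 1)) : Fin t := ⟨i.1, by have := i.isLt; omega⟩

/-- The endpoint `i+1` of the arrow `α_i` of the chain quiver. -/
def chainHigh (i : Fin (t - 1)) : Fin t := ⟨i.1 + 1, by have := i.isLt; omega⟩

/-- The source of the arrow `α_i`, for the orientation `o` (`o i = true` means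
`α_i : i → i+1`, and `o i = false` means `α_i : i+1 → i`). -/
def chainSrc (o : Fin (t - 1) → Bool) (i : Fin (t - 1)) : Fin t :=
  if o i then chainLow i else chainHigh i

/-- The target of the arrow `α_i`, for the orientation `o`. -/
def chainTgt (o : Fin (t - 1) → Bool) (i : Fin (t - 1)) : Fin t :=
  if o i then chainHigh i else chainLow i

/-- The dimension vector of the indecomposable representation `L_{ab}`:
`1` at the vertices `a, …, b` and `0` elsewhere. -/
def Ldim (a b : ℕ) (v : Fin t) : ℕ := if a ≤ v.1 ∧ v.1 ≤ b then 1 else 0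

/-- The indecomposable representation `L_{ab}` of the chain quiver: the `1×1` identity
matrix on every arrow joining two vertices of `{a, …, b}`, and zero matrices (with `0`
rows and/or `0` columns, hence with no entries at all) on all other arrows. -/
def Lrep (a b : ℕ) (o : Fin (t - 1) → Bool) (𝔽 : Type) [RCLike 𝔽] :
    QRep (Fin t) (Fin (t - 1)) (chainSrc o) (chainTgt o) (fun v => Fin (Ldim a b v)) 𝔽 :=
  fun _ => Matrix.of fun _ _ => 1

end Chain


lemma aux_sum_unique {σ M : Type} [Fintype σ] [AddCommMonoid M] (f : σ → M) (x₀ : σ)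
    (h : ∀ x, x = x₀) : ∑ x, f x = f x₀ :=
  Finset.sum_eq_single x₀ (fun b _ hb => absurd (h b) hb)
    (fun h' => absurd (Finset.mem_univ x₀) h')

lemma aux_smul_one_inv {n : Type} [Fintype n] [DecidableEq n] {𝔽 : Type} [RCLike 𝔽]
    (c : 𝔽) (hc : c ≠ 0) :
    (c • (1 : Matrix n n 𝔽))⁻¹ = c⁻¹ • (1 : Matrix n n 𝔽) := by
  have : Invertible c := invertibleOfNonzero hc
  rw [Matrix.inv_smul c (A := (1 : Matrix n n 𝔽)) (by simp), inv_one, invOf_eq_inv]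

/-- **Theorem 6(i).** For the chain quiver `1 — 2 — ⋯ — t` (vertices numbered
`0, …, t-1`) with an arbitrary orientation `o`, over `𝔽 = ℝ` or `ℂ`, and `p ≤ q < s`
(`s < t`), the one-parameter deformation of `A = L_{pq} ⊕ L_{q+1,s}` obtained by
replacing the zero `1×1` matrix assigned to the arrow joining `q` and `q+1` by `[λ]`
(all other matrices unchanged) is a miniversal deformation of `A`. -/
theorem miniversal_deformation_Lpq_Lq1s
    {t : ℕ} (o : Fin (t - 1) → Bool) {𝔽 : Type} [RCLike 𝔽]
    (p q s : ℕ) (hpq : p ≤ q) (hqs : q < s) (hs : s < t)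
    (A : QRep (Fin t) (Fin (t - 1)) (chainSrc o) (chainTgt o)
      (fun v => Fin (Ldim p q v) ⊕ Fin (Ldim (q + 1) s v)) 𝔽)
    (hA : A = fun α => Matrix.fromBlocks (Lrep p q o 𝔽 α) 0 0 (Lrep (q + 1) s o 𝔽 α))
    (D : (Fin 1 → 𝔽) → QRep (Fin t) (Fin (t - 1)) (chainSrc o) (chainTgt o)
      (fun v => Fin (Ldim p q v) ⊕ Fin (Ldim (q + 1) s v)) 𝔽)
    (hD : D = fun lam α => Matrix.of fun i j =>
      A α i j + (if α = (⟨q, by omega⟩ : Fin (t - 1)) then lam 0 else 0)) :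
    IsMiniversal A D := by
  have ht2 : 2 ≤ t := by omega
  have hq1 : q < t - 1 := by omega
  -- entries of A
  have hA11 : ∀ (β : Fin (t-1)) i j, A β (Sum.inl i) (Sum.inl j) = 1 := by
    intro β i j; rw [hA]; simp [Lrep]
  have hA22 : ∀ (β : Fin (t-1)) i j, A β (Sum.inr i) (Sum.inr j) = 1 := by
    intro β i j; rw [hA]; simp [Lrep]
  have hA12 : ∀ (β : Fin (t-1)) i j, A β (Sum.inl i) (Sum.inr j) = 0 := by
    intro β i j; rw [hA]; simp
  have hA21 : ∀ (β : Fin (t-1)) i j, A β (Sum.inr i) (Sum.inl j) = 0 := by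
    intro β i j; rw [hA]; simp
  -- unique/empty index types
  have hUL : ∀ v : Fin t, p ≤ v.1 → v.1 ≤ q →
      ∃ i0 : Fin (Ldim p q v), ∀ x : Fin (Ldim p q v) ⊕ Fin (Ldim (q+1) s v), x = Sum.inl i0 := by
    intro v h1 h2
    have e1 : Ldim p q v = 1 := by unfold Ldim; split <;> omega
    have e2 : Ldim (q+1) s v = 0 := by unfold Ldim; split <;> omega
    refine ⟨⟨0, by omega⟩, ?_⟩
    rintro (⟨av, ha⟩ | ⟨bv, hb⟩)
    · simp only [Sum.inl.injEq, Fin.mk.injEq]; omega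
    · omega
  have hUR : ∀ v : Fin t, q + 1 ≤ v.1 → v.1 ≤ s →
      ∃ i0 : Fin (Ldim (q+1) s v), ∀ x : Fin (Ldim p q v) ⊕ Fin (Ldim (q+1) s v), x = Sum.inr i0 := by
    intro v h1 h2
    have e1 : Ldim p q v = 0 := by unfold Ldim; split <;> omega
    have e2 : Ldim (q+1) s v = 1 := by unfold Ldim; split <;> omega
    refine ⟨⟨0, by omega⟩, ?_⟩
    rintro (⟨av, ha⟩ | ⟨bv, hb⟩)
    · omega
    · simp only [Sum.inr.injEq, Fin.mk.injEq]; omega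
  have hNo : ∀ v : Fin t, v.1 < p ∨ s < v.1 →
      ∀ _x : Fin (Ldim p q v) ⊕ Fin (Ldim (q+1) s v), False := by
    intro v hv x
    have e1 : Ldim p q v = 0 := by unfold Ldim; split <;> omega
    have e2 : Ldim (q+1) s v = 0 := by unfold Ldim; split <;> omega
    rcases x with ⟨av, ha⟩ | ⟨bv, hb⟩ <;> omega
  -- source/target values
  have hsb : ∀ γ : Fin (t-1), γ.1 ≤ (chainSrc o γ).1 ∧ (chainSrc o γ).1 ≤ γ.1+1 ∧
      γ.1 ≤ (chainTgt o γ).1 ∧ (chainTgt o γ).1 ≤ γ.1+1 ∧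
      (chainSrc o γ).1 + (chainTgt o γ).1 = γ.1 + γ.1 + 1 := by
    intro γ
    cases ho : o γ <;>
      simp [chainSrc, chainTgt, chainLow, chainHigh, ho] <;> omega
  have hSTd : ∀ γ : Fin (t-1),
      ((chainSrc o γ).1 = γ.1 ∧ (chainTgt o γ).1 = γ.1+1) ∨
      ((chainSrc o γ).1 = γ.1+1 ∧ (chainTgt o γ).1 = γ.1) := by
    intro γ; obtain ⟨b1, b2, b3, b4, b5⟩ := hsb γ; omega
  have hsrcT : ∀ γ : Fin (t-1), o γ = true →
      (chainSrc o γ).1 = γ.1 ∧ (chainTgt o γ).1 = γ.1+1 := by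
    intro γ hg; simp [chainSrc, chainTgt, chainLow, chainHigh, hg]
  have hsrcF : ∀ γ : Fin (t-1), o γ = false →
      (chainSrc o γ).1 = γ.1+1 ∧ (chainTgt o γ).1 = γ.1 := by
    intro γ hg; simp [chainSrc, chainTgt, chainLow, chainHigh, hg]
  -- entries of D
  have hDe : ∀ (lam : Fin 1 → 𝔽) (β : Fin (t-1)) i j,
      D lam β i j = A β i j + (if β.1 = q then lam 0 else 0) := by
    intro lam β i j
    rw [hD]
    simp only [Matrix.of_apply]
    congr 1
    by_cases h : β.1 = q <;> simp [Fin.ext_iff, h]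
  -- the arrow q matrix of A is zero
  have hAq : ∀ (β : Fin (t-1)), β.1 = q → ∀ i j, A β i j = 0 := by
    intro β hβ i j
    rcases hSTd β with ⟨hs1, ht1⟩ | ⟨hs1, ht1⟩
    · rcases i with ⟨iv, hiv⟩ | i
      · have : Ldim p q (chainTgt o β) = 0 := by unfold Ldim; split <;> omega
        omega
      · rcases j with j | ⟨jv, hjv⟩
        · exact hA21 β i j
        · have : Ldim (q+1) s (chainSrc o β) = 0 := by unfold Ldim; split <;> omega
          omega
    · rcases i with i | ⟨iv, hiv⟩
      · rcases j with ⟨jv, hjv⟩ | j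
        · have : Ldim p q (chainSrc o β) = 0 := by unfold Ldim; split <;> omega
          omega
        · exact hA12 β i j
      · have : Ldim (q+1) s (chainTgt o β) = 0 := by unfold Ldim; split <;> omega
        omega
  -- D is a deformation of A
  have hDdef : IsDeformation A D := by
    constructor
    · funext β
      ext i j
      rw [hDe]
      simp
    · intro β i j
      simp only [hDe]
      apply analyticAt_const.add
      by_cases h : β.1 = q
      · simp only [h, if_true]
        exact (ContinuousLinearMap.proj (R := 𝔽) (φ := fun _ : Fin 1 => 𝔽) 0).analyticAt 0
      · simp only [h, if_false]
        exact analyticAt_const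
  refine ⟨⟨hDdef, ?_⟩, ?_⟩
  · -- versality
    intro l B hB
    obtain ⟨hB0, hBan⟩ := hB
    classical
    set bf : Fin (t-1) → (Fin l → 𝔽) → 𝔽 := fun β μ => ∑ i, ∑ j, B μ β i j with hbf
    have hbfan : ∀ β, AnalyticAt 𝔽 (fun μ => bf β μ) (0 : Fin l → 𝔽) := by
      intro β
      simp only [hbf]
      exact Finset.analyticAt_fun_sum _ fun i _ => Finset.analyticAt_fun_sum _ fun j _ => hBan β i j
    have hbf0 : ∀ β : Fin (t-1), p ≤ β.1 → β.1 + 1 ≤ s → β.1 ≠ q → bf β 0 = 1 := by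
      intro β h1 h2 h3
      obtain ⟨b1, b2, b3, b4, b5⟩ := hsb β
      simp only [hbf, hB0]
      rcases (by omega : β.1 + 1 ≤ q ∨ q + 1 ≤ β.1) with hc | hc
      · obtain ⟨i0, hi⟩ := hUL (chainTgt o β) (by omega) (by omega)
        obtain ⟨j0, hj⟩ := hUL (chainSrc o β) (by omega) (by omega)
        rw [aux_sum_unique (fun i => ∑ j, A β i j) _ hi, aux_sum_unique _ _ hj]
        exact hA11 β i0 j0
      · obtain ⟨i0, hi⟩ := hUR (chainTgt o β) (by omega) (by omega)
        obtain ⟨j0, hj⟩ := hUR (chainSrc o β) (by omega) (by omega)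
        rw [aux_sum_unique (fun i => ∑ j, A β i j) _ hi, aux_sum_unique _ _ hj]
        exact hA22 β i0 j0
    have hbfq0 : bf ⟨q, hq1⟩ 0 = 0 := by
      simp only [hbf, hB0]
      apply Finset.sum_eq_zero; intro i _
      apply Finset.sum_eq_zero; intro j _
      exact hAq ⟨q, hq1⟩ rfl i j
    set st : ℕ → (Fin l → 𝔽) → 𝔽 := fun a μ =>
      if h : a < t - 1 then (if o ⟨a, h⟩ then bf ⟨a, h⟩ μ else (bf ⟨a, h⟩ μ)⁻¹) else 1 with hst
    have hstval : ∀ (a : ℕ) (h : a < t - 1) (μ : Fin l → 𝔽),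
        st a μ = if o ⟨a, h⟩ then bf ⟨a, h⟩ μ else (bf ⟨a, h⟩ μ)⁻¹ := by
      intro a h μ
      simp only [hst]
      rw [dif_pos h]
    have hst0 : ∀ (a : ℕ), a < t - 1 → p ≤ a → a + 1 ≤ s → a ≠ q → st a 0 = 1 := by
      intro a h h1 h2 h3
      rw [hstval a h, hbf0 ⟨a, h⟩ h1 h2 h3]
      split <;> simp
    have hstan : ∀ (a : ℕ), a < t - 1 → p ≤ a → a + 1 ≤ s → a ≠ q →
        AnalyticAt 𝔽 (fun μ => st a μ) (0 : Fin l → 𝔽) := by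
      intro a h h1 h2 h3
      have he : (fun μ => st a μ) = fun μ =>
          if o ⟨a, h⟩ then bf ⟨a, h⟩ μ else (bf ⟨a, h⟩ μ)⁻¹ := funext fun μ => hstval a h μ
      rw [he]
      by_cases ho : o ⟨a, h⟩
      · simpa [ho] using hbfan ⟨a, h⟩
      · simp only [ho, if_false, Bool.false_eq_true]
        exact (hbfan ⟨a, h⟩).inv (by rw [hbf0 ⟨a, h⟩ h1 h2 h3]; exact one_ne_zero)
    have hstne : ∀ (μ : Fin l → 𝔽),
        (∀ β : Fin (t-1), p ≤ β.1 → β.1 + 1 ≤ s → β.1 ≠ q → bf β μ ≠ 0) →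
        ∀ (a : ℕ), a < t - 1 → p ≤ a → a + 1 ≤ s → a ≠ q → st a μ ≠ 0 := by
      intro μ H a h h1 h2 h3
      rw [hstval a h]
      have hne : bf ⟨a, h⟩ μ ≠ 0 := H ⟨a, h⟩ h1 h2 h3
      split
      · exact hne
      · exact inv_ne_zero hne
    set c : ℕ → (Fin l → 𝔽) → 𝔽 := fun v μ =>
      if p ≤ v ∧ v ≤ q then ∏ i ∈ Finset.Ico v q, (st i μ)⁻¹
      else if q + 1 ≤ v ∧ v ≤ s then ∏ i ∈ Finset.Ico (q + 1) v, st i μ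
      else 1 with hcdef
    have hcq : ∀ μ, c q μ = 1 := by
      intro μ; simp only [hcdef]
      rw [if_pos ⟨hpq, le_refl q⟩]
      simp
    have hcq1 : ∀ μ, c (q+1) μ = 1 := by
      intro μ; simp only [hcdef]
      rw [if_neg (by omega), if_pos ⟨le_refl _, by omega⟩]
      simp
    have hc0 : ∀ v, c v 0 = 1 := by
      intro v; simp only [hcdef]
      split
      · next h =>
        apply Finset.prod_eq_one
        intro i hi
        rw [Finset.mem_Ico] at hi
        rw [hst0 i (by omega) (by omega) (by omega) (by omega)]
        exact inv_one
      · split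
        · next h =>
          apply Finset.prod_eq_one
          intro i hi
          rw [Finset.mem_Ico] at hi
          exact hst0 i (by omega) (by omega) (by omega) (by omega)
        · rfl
    have hcan : ∀ v, AnalyticAt 𝔽 (fun μ => c v μ) (0 : Fin l → 𝔽) := by
      intro v
      simp only [hcdef]
      by_cases h : p ≤ v ∧ v ≤ q
      · simp only [if_pos h]
        apply Finset.analyticAt_fun_prod
        intro i hi
        rw [Finset.mem_Ico] at hi
        exact (hstan i (by omega) (by omega) (by omega) (by omega)).inv
          (by rw [hst0 i (by omega) (by omega) (by omega) (by omega)]; exact one_ne_zero)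
      · simp only [if_neg h]
        by_cases h2 : q + 1 ≤ v ∧ v ≤ s
        · simp only [if_pos h2]
          apply Finset.analyticAt_fun_prod
          intro i hi
          rw [Finset.mem_Ico] at hi
          exact hstan i (by omega) (by omega) (by omega) (by omega)
        · simp only [if_neg h2]
          exact analyticAt_const
    have hcne : ∀ (μ : Fin l → 𝔽),
        (∀ β : Fin (t-1), p ≤ β.1 → β.1 + 1 ≤ s → β.1 ≠ q → bf β μ ≠ 0) →
        ∀ v, c v μ ≠ 0 := by
      intro μ H v
      simp only [hcdef]
      split
      · next h =>
        rw [Finset.prod_ne_zero_iff]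
        intro i hi
        rw [Finset.mem_Ico] at hi
        exact inv_ne_zero (hstne μ H i (by omega) (by omega) (by omega) (by omega))
      · split
        · next h =>
          rw [Finset.prod_ne_zero_iff]
          intro i hi
          rw [Finset.mem_Ico] at hi
          exact hstne μ H i (by omega) (by omega) (by omega) (by omega)
        · exact one_ne_zero
    have hrecdown : ∀ (μ : Fin l → 𝔽) (a : ℕ), p ≤ a → a + 1 ≤ q →
        c a μ = (st a μ)⁻¹ * c (a+1) μ := by
      intro μ a h1 h2
      simp only [hcdef]
      rw [if_pos (⟨h1, by omega⟩ : p ≤ a ∧ a ≤ q),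
        if_pos (⟨by omega, h2⟩ : p ≤ a + 1 ∧ a + 1 ≤ q),
        Finset.prod_eq_prod_Ico_succ_bot (by omega : a < q)]
    have hrecup : ∀ (μ : Fin l → 𝔽) (a : ℕ), q + 1 ≤ a → a + 1 ≤ s →
        c (a+1) μ = c a μ * st a μ := by
      intro μ a h1 h2
      simp only [hcdef]
      rw [if_neg (by omega : ¬(p ≤ a + 1 ∧ a + 1 ≤ q)),
        if_pos (⟨by omega, h2⟩ : q + 1 ≤ a + 1 ∧ a + 1 ≤ s),
        if_neg (by omega : ¬(p ≤ a ∧ a ≤ q)),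
        if_pos (⟨h1, by omega⟩ : q + 1 ≤ a ∧ a ≤ s),
        Finset.prod_Ico_succ_top (by omega : q + 1 ≤ a)]
    have hratio : ∀ (μ : Fin l → 𝔽),
        (∀ β : Fin (t-1), p ≤ β.1 → β.1 + 1 ≤ s → β.1 ≠ q → bf β μ ≠ 0) →
        ∀ β : Fin (t-1), p ≤ β.1 → β.1 + 1 ≤ s → β.1 ≠ q →
        c (chainTgt o β).1 μ * (c (chainSrc o β).1 μ)⁻¹ = bf β μ := by
      intro μ H β h1 h2 h3
      have hb : bf β μ ≠ 0 := H β h1 h2 h3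
      have hc1 : c (β.1 + 1) μ ≠ 0 := hcne μ H _
      have hc2 : c β.1 μ ≠ 0 := hcne μ H _
      have hsv : st β.1 μ = if o β then bf β μ else (bf β μ)⁻¹ := hstval β.1 β.isLt μ
      rcases (by omega : β.1 + 1 ≤ q ∨ q + 1 ≤ β.1) with hpos | hpos <;> cases ho : o β
      · -- down, o = false : src = β+1, tgt = β
        rw [(hsrcF β ho).1, (hsrcF β ho).2, hrecdown μ β.1 h1 hpos, hsv, if_neg (by simp [ho])]
        field_simp
      · rw [(hsrcT β ho).1, (hsrcT β ho).2, hrecdown μ β.1 h1 hpos, hsv, if_pos ho]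
        field_simp
      · rw [(hsrcF β ho).1, (hsrcF β ho).2, hrecup μ β.1 hpos h2, hsv, if_neg (by simp [ho])]
        field_simp
      · rw [(hsrcT β ho).1, (hsrcT β ho).2, hrecup μ β.1 hpos h2, hsv, if_pos ho]
        field_simp
    have hev : ∀ᶠ μ in nhds (0 : Fin l → 𝔽),
        ∀ β : Fin (t-1), p ≤ β.1 → β.1 + 1 ≤ s → β.1 ≠ q → bf β μ ≠ 0 := by
      rw [eventually_all]
      intro β
      by_cases h : p ≤ β.1 ∧ β.1 + 1 ≤ s ∧ β.1 ≠ q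
      · have h0 : bf β 0 ≠ 0 := by rw [hbf0 β h.1 h.2.1 h.2.2]; exact one_ne_zero
        filter_upwards [(hbfan β).continuousAt.eventually_ne h0] with μ hμ _ _ _
        exact hμ
      · filter_upwards with μ h1 h2 h3
        exact absurd ⟨h1, h2, h3⟩ h
    refine ⟨fun μ _ => bf ⟨q, hq1⟩ μ, funext fun _ => hbfq0, fun _ => hbfan _, ?_⟩
    refine ⟨fun v μ => c v.1 μ • 1, fun v => by show c v.1 0 • (1 : Matrix _ _ 𝔽) = 1; rw [hc0 v.1, one_smul], ?_, ?_⟩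
    · intro v i j
      simp only [Matrix.smul_apply, smul_eq_mul]
      exact (hcan v.1).mul analyticAt_const
    · intro β
      filter_upwards [hev] with μ H
      by_cases hact : p ≤ β.1 ∧ β.1 + 1 ≤ s
      · have hcsne : c (chainSrc o β).1 μ ≠ 0 := hcne μ H _
        have hRHS : ∀ X : Matrix (Fin (Ldim p q (chainTgt o β)) ⊕ Fin (Ldim (q+1) s (chainTgt o β)))
            (Fin (Ldim p q (chainSrc o β)) ⊕ Fin (Ldim (q+1) s (chainSrc o β))) 𝔽,
            (c (chainTgt o β).1 μ • (1 : Matrix (Fin (Ldim p q (chainTgt o β)) ⊕ Fin (Ldim (q+1) s (chainTgt o β))) (Fin (Ldim p q (chainTgt o β)) ⊕ Fin (Ldim (q+1) s (chainTgt o β))) 𝔽)) * X *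
              (c (chainSrc o β).1 μ • (1 : Matrix (Fin (Ldim p q (chainSrc o β)) ⊕ Fin (Ldim (q+1) s (chainSrc o β))) (Fin (Ldim p q (chainSrc o β)) ⊕ Fin (Ldim (q+1) s (chainSrc o β))) 𝔽))⁻¹ =
            (c (chainTgt o β).1 μ * (c (chainSrc o β).1 μ)⁻¹) • X := by
          intro X
          rw [aux_smul_one_inv _ hcsne, Matrix.smul_mul, Matrix.one_mul, Matrix.mul_smul,
            Matrix.mul_one, smul_smul, mul_comm]
        show B μ β = _
        rw [hRHS]
        by_cases hq' : β.1 = q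
        · have e1 : c (chainTgt o β).1 μ = 1 ∧ c (chainSrc o β).1 μ = 1 := by
            rcases hSTd β with ⟨hs1, ht1⟩ | ⟨hs1, ht1⟩
            · rw [hs1, ht1, hq']; exact ⟨hcq1 μ, hcq μ⟩
            · rw [hs1, ht1, hq']; exact ⟨hcq μ, hcq1 μ⟩
          rw [e1.1, e1.2, inv_one, mul_one, one_smul]
          ext i j
          rw [hDe, hAq β hq' i j, if_pos hq', zero_add]
          have hβ : β = (⟨q, hq1⟩ : Fin (t-1)) := Fin.ext hq'
          rw [← hβ]
          rcases hSTd β with ⟨hs1, ht1⟩ | ⟨hs1, ht1⟩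
          · obtain ⟨j0, hj⟩ := hUL (chainSrc o β) (by omega) (by omega)
            obtain ⟨i0, hi⟩ := hUR (chainTgt o β) (by omega) (by omega)
            calc B μ β i j = B μ β (Sum.inr i0) (Sum.inl j0) := by rw [hi i, hj j]
              _ = ∑ i', ∑ j', B μ β i' j' := by
                  rw [aux_sum_unique (fun i' => ∑ j', B μ β i' j') _ hi,
                    aux_sum_unique _ _ hj]
              _ = bf β μ := rfl
          · obtain ⟨j0, hj⟩ := hUR (chainSrc o β) (by omega) (by omega)
            obtain ⟨i0, hi⟩ := hUL (chainTgt o β) (by omega) (by omega)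
            calc B μ β i j = B μ β (Sum.inl i0) (Sum.inr j0) := by rw [hi i, hj j]
              _ = ∑ i', ∑ j', B μ β i' j' := by
                  rw [aux_sum_unique (fun i' => ∑ j', B μ β i' j') _ hi,
                    aux_sum_unique _ _ hj]
              _ = bf β μ := rfl
        · obtain ⟨b1, b2, b3, b4, b5⟩ := hsb β
          ext i j
          simp only [Matrix.smul_apply, smul_eq_mul]
          rw [hDe, if_neg hq', add_zero]
          rcases (by omega : β.1 + 1 ≤ q ∨ q + 1 ≤ β.1) with hlt | hgt
          · obtain ⟨i0, hi⟩ := hUL (chainTgt o β) (by omega) (by omega)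
            obtain ⟨j0, hj⟩ := hUL (chainSrc o β) (by omega) (by omega)
            rw [hi i, hj j, hA11 β i0 j0, mul_one, hratio μ H β hact.1 hact.2 hq']
            calc B μ β (Sum.inl i0) (Sum.inl j0)
                = ∑ i', ∑ j', B μ β i' j' := by
                  rw [aux_sum_unique (fun i' => ∑ j', B μ β i' j') _ hi,
                    aux_sum_unique _ _ hj]
              _ = bf β μ := rfl
          · obtain ⟨i0, hi⟩ := hUR (chainTgt o β) (by omega) (by omega)
            obtain ⟨j0, hj⟩ := hUR (chainSrc o β) (by omega) (by omega)
            rw [hi i, hj j, hA22 β i0 j0, mul_one, hratio μ H β hact.1 hact.2 hq']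
            calc B μ β (Sum.inr i0) (Sum.inr j0)
                = ∑ i', ∑ j', B μ β i' j' := by
                  rw [aux_sum_unique (fun i' => ∑ j', B μ β i' j') _ hi,
                    aux_sum_unique _ _ hj]
              _ = bf β μ := rfl
      · ext i j
        exfalso
        obtain ⟨b1, b2, b3, b4, b5⟩ := hsb β
        rcases (by omega : β.1 < p ∨ s < β.1 + 1) with hout | hout
        · rcases (by omega : (chainSrc o β).1 = β.1 ∨ (chainTgt o β).1 = β.1) with h | h
          · exact hNo (chainSrc o β) (Or.inl (by omega)) j
          · exact hNo (chainTgt o β) (Or.inl (by omega)) i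
        · rcases (by omega : (chainSrc o β).1 = β.1 + 1 ∨ (chainTgt o β).1 = β.1 + 1) with h | h
          · exact hNo (chainSrc o β) (Or.inr (by omega)) j
          · exact hNo (chainTgt o β) (Or.inr (by omega)) i
  · -- minimality
    intro l B hB
    simp only [Fintype.card_fin]
    by_contra hl
    have hl0 : l = 0 := by omega
    subst hl0
    obtain ⟨φ, hφ0, hφan, I, hI0, hIan, hIeq⟩ := hB.2 1 D hDdef
    have hBA : ∀ mu : Fin 1 → 𝔽, B (φ mu) = A := by
      intro mu
      have hmu : φ mu = 0 := funext fun x => x.elim0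
      rw [hmu, hB.1.1]
    have hA0 : A ⟨q, hq1⟩ = 0 := by
      ext i j; exact hAq ⟨q, hq1⟩ rfl i j
    have hzero : ∀ᶠ lam in nhds (0 : Fin 1 → 𝔽), lam 0 = 0 := by
      have hq' := hIeq ⟨q, hq1⟩
      obtain ⟨b1, b2, b3, b4, b5⟩ := hsb ⟨q, hq1⟩
      have hval : (⟨q, hq1⟩ : Fin (t-1)).1 = q := rfl
      filter_upwards [hq'] with lam hlam
      rw [hBA lam, hA0, Matrix.mul_zero, Matrix.zero_mul] at hlam
      rcases hSTd ⟨q, hq1⟩ with ⟨hs1, ht1⟩ | ⟨hs1, ht1⟩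
      · obtain ⟨j0, hj⟩ := hUL (chainSrc o ⟨q, hq1⟩) (by omega) (by omega)
        obtain ⟨i0, hi⟩ := hUR (chainTgt o ⟨q, hq1⟩) (by omega) (by omega)
        have := congrArg (fun M => M (Sum.inr i0) (Sum.inl j0)) hlam
        simp only [Matrix.zero_apply] at this
        rw [hDe, hAq ⟨q, hq1⟩ rfl, if_pos rfl, zero_add] at this
        exact this
      · obtain ⟨j0, hj⟩ := hUR (chainSrc o ⟨q, hq1⟩) (by omega) (by omega)
        obtain ⟨i0, hi⟩ := hUL (chainTgt o ⟨q, hq1⟩) (by omega) (by omega)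
        have := congrArg (fun M => M (Sum.inl i0) (Sum.inr j0)) hlam
        simp only [Matrix.zero_apply] at this
        rw [hDe, hAq ⟨q, hq1⟩ rfl, if_pos rfl, zero_add] at this
        exact this
    have hcont : ContinuousAt (fun y : 𝔽 => (fun _ => y : Fin 1 → 𝔽)) 0 :=
      (continuous_pi fun _ => continuous_id).continuousAt
    have h2 : ∀ᶠ y in nhds (0 : 𝔽), y = 0 := hcont.tendsto.eventually hzero
    have h4 : ∀ᶠ y in nhdsWithin (0 : 𝔽) {(0 : 𝔽)}ᶜ, y = 0 := h2.filter_mono nhdsWithin_le_nhds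
    have h5 : ∀ᶠ y in nhdsWithin (0 : 𝔽) {(0 : 𝔽)}ᶜ, y ≠ 0 := by
      filter_upwards [eventually_mem_nhdsWithin] with y hy
      exact hy
    obtain ⟨y, hy1, hy2⟩ := (h4.and h5).exists
    exact hy2 hy1
end

section
/- Let 𝔽 be ℝ or ℂ, let a ∈ 𝔽^{2×1} be the column (1, 0)ᵀ and b ∈ 𝔽^{1×2} the row (0, 1). In the 𝔽-vector space 𝔽^{2×1} × 𝔽^{1×2}, let V = {(C·a − a·c₁, c₃·b − b·C) : c₁, c₃ ∈ 𝔽, C ∈ 𝔽^{2×2}} and let W be the one-dimensional subspace spanned by (0, e) where e ∈ 𝔽^{1×2} is the row (1, 0). Then 𝔽^{2×1} × 𝔽^{1×2} = V ⊕ W, i.e. V ∩ W = {0} and V + W = 𝔽^{2×1} × 𝔽^{1×2}. -/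
open Pointwise

/-- Let `𝔽` be `ℝ` or `ℂ`, `a = (1,0)ᵀ ∈ 𝔽^{2×1}`, `b = (0,1) ∈ 𝔽^{1×2}`. In
`𝔽^{2×1} × 𝔽^{1×2}`, let `V = {(C·a − a·c₁, c₃·b − b·C)}` and let `W` be the span of
`(0, e)` with `e = (1,0) ∈ 𝔽^{1×2}`. Then `𝔽^{2×1} × 𝔽^{1×2} = V ⊕ W`, i.e.
`V ∩ W = {0}` and `V + W` is everything. -/
theorem direct_sum_decomposition_L12_L23_right_right (𝔽 : Type) [RCLike 𝔽]
    (a : Matrix (Fin 2) (Fin 1) 𝔽) (ha : a = !![1; 0])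
    (b : Matrix (Fin 1) (Fin 2) 𝔽) (hb : b = !![0, 1])
    (e : Matrix (Fin 1) (Fin 2) 𝔽) (he : e = !![1, 0])
    (V W : Set (Matrix (Fin 2) (Fin 1) 𝔽 × Matrix (Fin 1) (Fin 2) 𝔽))
    (hV : V = {x | ∃ (c₁ c₃ : 𝔽) (C : Matrix (Fin 2) (Fin 2) 𝔽),
      x = (C * a - c₁ • a, c₃ • b - b * C)})
    (hW : W = {x | ∃ μ : 𝔽, x = μ • ((0 : Matrix (Fin 2) (Fin 1) 𝔽), e)}) :
    V ∩ W = {0} ∧ V + W = Set.univ := by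
  subst ha hb he hV hW
  constructor
  · ext x
    simp only [Set.mem_inter_iff, Set.mem_setOf_eq, Set.mem_singleton_iff]
    constructor
    · rintro ⟨⟨c₁, c₃, C, rfl⟩, μ, h⟩
      have h1 := congrArg Prod.fst h
      have h2 := congrArg Prod.snd h
      simp only at h1 h2
      have hC10 : C 1 0 = 0 := by
        have := congrFun (congrFun h1 1) 0
        simpa [Matrix.mul_apply, Fin.sum_univ_two] using this
      have hμ : μ = -C 1 0 := by
        have := congrFun (congrFun h2 0) 0
        simpa [Matrix.mul_apply, Matrix.vecMul, dotProduct, Fin.sum_univ_two, Matrix.vecHead, Matrix.vecTail] using this.symm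
      have hμ0 : μ = 0 := by rw [hμ, hC10, neg_zero]
      rw [h, hμ0, zero_smul]
    · rintro rfl
      refine ⟨⟨0, 0, 0, ?_⟩, 0, by simp⟩
      simp; rfl
  · ext x
    simp only [Set.mem_add, Set.mem_setOf_eq, Set.mem_univ, iff_true]
    obtain ⟨p, q⟩ := x
    refine ⟨(!![p 0 0, 0; p 1 0, 0] * !![1; 0] - (0 : 𝔽) • !![1; 0],
        q 0 1 • !![0, 1] - !![0, 1] * !![p 0 0, 0; p 1 0, 0]),
      ⟨0, q 0 1, !![p 0 0, 0; p 1 0, 0], rfl⟩,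
      (q 0 0 + p 1 0) • ((0 : Matrix (Fin 2) (Fin 1) 𝔽), !![1, 0]),
      ⟨q 0 0 + p 1 0, rfl⟩, ?_⟩
    refine Prod.ext ?_ ?_ <;> ext i j <;> fin_cases i <;> fin_cases j <;>
      simp [Matrix.mul_apply, Fin.sum_univ_two]
end

section
/- Let 𝔽 be ℝ or ℂ, let a ∈ 𝔽^{1×2} be the row (1, 0) and b ∈ 𝔽^{2×1} the column (0, 1)ᵀ. In the 𝔽-vector space 𝔽^{1×2} × 𝔽^{2×1}, let V = {(c₁·a − a·C, C·b − b·c₃) : c₁, c₃ ∈ 𝔽, C ∈ 𝔽^{2×2}} and let W be the one-dimensional subspace spanned by (0, e) where e ∈ 𝔽^{2×1} is the column (1, 0)ᵀ. Then 𝔽^{1×2} × 𝔽^{2×1} = V ⊕ W, i.e. V ∩ W = {0} and V + W = 𝔽^{1×2} × 𝔽^{2×1}. -/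
open Pointwise

/-- Let `𝔽` be `ℝ` or `ℂ`, `a = (1,0) ∈ 𝔽^{1×2}`, `b = (0,1)ᵀ ∈ 𝔽^{2×1}`. In
`𝔽^{1×2} × 𝔽^{2×1}`, let `V = {(c₁·a − a·C, C·b − b·c₃)}` and let `W` be the span of
`(0, e)` with `e = (1,0)ᵀ ∈ 𝔽^{2×1}`. Then `𝔽^{1×2} × 𝔽^{2×1} = V ⊕ W`, i.e.
`V ∩ W = {0}` and `V + W` is everything. -/
theorem direct_sum_decomposition_L12_L23_left_left (𝔽 : Type) [RCLike 𝔽]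
    (a : Matrix (Fin 1) (Fin 2) 𝔽) (ha : a = !![1, 0])
    (b : Matrix (Fin 2) (Fin 1) 𝔽) (hb : b = !![0; 1])
    (e : Matrix (Fin 2) (Fin 1) 𝔽) (he : e = !![1; 0])
    (V W : Set (Matrix (Fin 1) (Fin 2) 𝔽 × Matrix (Fin 2) (Fin 1) 𝔽))
    (hV : V = {x | ∃ (c₁ c₃ : 𝔽) (C : Matrix (Fin 2) (Fin 2) 𝔽),
      x = (c₁ • a - a * C, C * b - c₃ • b)})
    (hW : W = {x | ∃ μ : 𝔽, x = μ • ((0 : Matrix (Fin 1) (Fin 2) 𝔽), e)}) :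
    V ∩ W = {0} ∧ V + W = Set.univ := by
  subst ha hb he hV hW
  constructor
  · ext x
    simp only [Set.mem_inter_iff, Set.mem_setOf_eq, Set.mem_singleton_iff]
    constructor
    · rintro ⟨⟨c₁, c₃, C, rfl⟩, μ, hμ⟩
      rw [Prod.ext_iff] at hμ
      obtain ⟨h1, h2⟩ := hμ
      have e1 := congrFun (congrFun h1 0) 1
      have e2 := congrFun (congrFun h2 0) 0
      simp [Matrix.mul_apply, Matrix.vecMul, dotProduct, Matrix.vecHead, Fin.sum_univ_two] at e1 e2
      have hμ0 : μ = 0 := by rw [← e2, e1]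
      rw [hμ0] at h1 h2
      simp only [zero_smul, Prod.smul_mk, smul_zero] at h1 h2 ⊢
      exact Prod.ext h1 h2
    · rintro rfl
      refine ⟨⟨0, 0, 0, ?_⟩, 0, by simp⟩
      simp [Prod.ext_iff]
  · ext x
    simp only [Set.mem_univ, iff_true]
    obtain ⟨p, q⟩ := x
    rw [Set.mem_add]
    refine ⟨(p 0 0 • !![1, 0] - !![1, 0] * !![0, -p 0 1; 0, q 1 0],
        !![0, -p 0 1; 0, q 1 0] * !![0; 1] - (0 : 𝔽) • !![0; 1]),
      ⟨p 0 0, 0, !![0, -p 0 1; 0, q 1 0], rfl⟩,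
      (q 0 0 + p 0 1) • (0, !![1; 0]), ⟨q 0 0 + p 0 1, rfl⟩, ?_⟩
    refine Prod.ext ?_ ?_ <;>
    · ext i j
      fin_cases i <;> fin_cases j <;>
        simp [Matrix.mul_apply, Fin.sum_univ_two]
end

section
/- Let m ≥ 3 be a natural number, and define sequences of real numbers ε₁, δ₁, ε₂, δ₂, … by ε₁ = δ₁ = m^{−7}, ε_{i+1} = m·ε_i·δ_i, and δ_{i+1} = δ_i + m·ε_i. Then ε_i < m^{−4i} and δ_i < m^{−5} for all i ≥ 1, and the series ε₁ + ε₂ + ε₃ + ⋯ converges with sum less than 2. -/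
/-- **Lemma 8.** Let `m ≥ 3` be a natural number and define
`ε₁ = δ₁ = m⁻⁷`, `ε_{i+1} = m·ε_i·δ_i`, `δ_{i+1} = δ_i + m·ε_i`. Then
`ε_i < m^{-4i}` and `δ_i < m^{-5}` for all `i ≥ 1`, and
`ε₁ + ε₂ + ε₃ + ⋯` converges with sum `< 2`. -/
theorem eps_delta_sequences_bounds (m : ℕ) (hm : 3 ≤ m) (ε δ : ℕ → ℝ)
    (hε1 : ε 1 = ((m : ℝ) ^ 7)⁻¹) (hδ1 : δ 1 = ((m : ℝ) ^ 7)⁻¹)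
    (hεrec : ∀ i ≥ 1, ε (i + 1) = m * ε i * δ i)
    (hδrec : ∀ i ≥ 1, δ (i + 1) = δ i + m * ε i) :
    (∀ i ≥ 1, ε i < ((m : ℝ) ^ (4 * i))⁻¹ ∧ δ i < ((m : ℝ) ^ 5)⁻¹) ∧
      Summable (fun i : ℕ => ε (i + 1)) ∧ ∑' i : ℕ, ε (i + 1) < 2 := by
  have hm3 : (3:ℝ) ≤ (m:ℝ) := by exact_mod_cast hm
  have hm1 : (1:ℝ) < (m:ℝ) := by linarith
  have hm0 : (0:ℝ) < (m:ℝ) := by linarith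
  have hne : (m:ℝ) ≠ 0 := ne_of_gt hm0
  have hpow : ∀ k : ℕ, (0:ℝ) < (m:ℝ)^k := fun k => pow_pos hm0 k
  have key : ∀ i ≥ 1, 0 ≤ ε i ∧ 0 ≤ δ i ∧ ε i ≤ ((m:ℝ)^(4*i+3))⁻¹ ∧
      δ i ≤ ((m:ℝ)^5)⁻¹ - 2*((m:ℝ)^(4*i+2))⁻¹ := by
    intro i hi
    induction i, hi using Nat.le_induction with
    | base =>
      rw [hε1, hδ1]
      refine ⟨by positivity, by positivity, ?_, ?_⟩
      · norm_num
      have h1 : ((m:ℝ)^7)⁻¹ + 2*((m:ℝ)^6)⁻¹ ≤ ((m:ℝ)^5)⁻¹ := by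
        have e : ((m:ℝ)^5)⁻¹ - (((m:ℝ)^7)⁻¹ + 2*((m:ℝ)^6)⁻¹) =
            ((m:ℝ)^2 - 2*(m:ℝ) - 1) / (m:ℝ)^7 := by
          field_simp
          ring
        have hnum : (0:ℝ) ≤ ((m:ℝ)^2 - 2*(m:ℝ) - 1) / (m:ℝ)^7 :=
          div_nonneg (by nlinarith) (le_of_lt (hpow 7))
        linarith
      linarith [inv_pos.mpr (hpow 6)]
    | succ n hn ih =>
      obtain ⟨he0, hd0, heb, hdb⟩ := ih
      have hd5 : δ n ≤ ((m:ℝ)^5)⁻¹ :=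
        le_trans hdb (by nlinarith [inv_pos.mpr (hpow (4*n+2))])
      refine ⟨?_, ?_, ?_, ?_⟩
      · rw [hεrec n hn]; positivity
      · rw [hδrec n hn]; positivity
      · rw [hεrec n hn]
        have h1 : (m:ℝ) * ε n * δ n ≤ (m:ℝ) * ((m:ℝ)^(4*n+3))⁻¹ * ((m:ℝ)^5)⁻¹ := by
          apply mul_le_mul _ hd5 hd0 (by positivity)
          exact mul_le_mul_of_nonneg_left heb (le_of_lt hm0)
        have h2 : (m:ℝ) * ((m:ℝ)^(4*n+3))⁻¹ * ((m:ℝ)^5)⁻¹ = ((m:ℝ)^(4*(n+1)+3))⁻¹ := by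
          field_simp
          ring
        linarith [h1, h2.le, h2.ge]
      · rw [hδrec n hn]
        have h1 : (m:ℝ) * ε n ≤ (m:ℝ) * ((m:ℝ)^(4*n+3))⁻¹ :=
          mul_le_mul_of_nonneg_left heb (le_of_lt hm0)
        have h2 : (m:ℝ) * ((m:ℝ)^(4*n+3))⁻¹ = ((m:ℝ)^(4*n+2))⁻¹ := by
          field_simp
          ring
        have hm4 : (2:ℝ) ≤ (m:ℝ)^4 := by
          have := pow_le_pow_left₀ (by norm_num : (0:ℝ) ≤ 3) hm3 4
          norm_num at this
          linarith
        have hb : ((m:ℝ)^4)⁻¹ ≤ 2⁻¹ := inv_anti₀ (by norm_num) hm4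
        have hsplit : ((m:ℝ)^(4*(n+1)+2))⁻¹ = ((m:ℝ)^(4*n+2))⁻¹ * ((m:ℝ)^4)⁻¹ := by
          rw [← mul_inv]
          congr 1
          ring
        have h3 : 2*((m:ℝ)^(4*(n+1)+2))⁻¹ ≤ ((m:ℝ)^(4*n+2))⁻¹ := by
          rw [hsplit]
          nlinarith [inv_pos.mpr (hpow (4*n+2))]
        linarith
  refine ⟨?_, ?_⟩
  · intro i hi
    obtain ⟨he0, hd0, heb, hdb⟩ := key i hi
    constructor
    · refine lt_of_le_of_lt heb ?_
      apply inv_strictAnti₀ (hpow (4*i))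
      exact pow_lt_pow_right₀ hm1 (by omega)
    · linarith [inv_pos.mpr (hpow (4*i+2))]
  · set r : ℝ := ((m:ℝ)^4)⁻¹ with hr
    have hr0 : (0:ℝ) ≤ r := by positivity
    have hr1 : r < 1 := inv_lt_one_of_one_lt₀ (one_lt_pow₀ hm1 (by norm_num))
    have hg : Summable (fun i : ℕ => ((m:ℝ)^7)⁻¹ * r ^ i) :=
      (summable_geometric_of_lt_one hr0 hr1).mul_left _
    have hle : ∀ i : ℕ, ε (i+1) ≤ ((m:ℝ)^7)⁻¹ * r ^ i := by
      intro i
      refine le_trans (key (i+1) (by omega)).2.2.1 (le_of_eq ?_)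
      rw [hr, inv_pow, ← pow_mul, ← mul_inv, ← pow_add]
      congr 1
      ring
    have hnn : ∀ i : ℕ, 0 ≤ ε (i+1) := fun i => (key (i+1) (by omega)).1
    have hsum : Summable (fun i : ℕ => ε (i + 1)) :=
      Summable.of_nonneg_of_le hnn hle hg
    refine ⟨hsum, ?_⟩
    have htsum : ∑' i : ℕ, ε (i+1) ≤ ((m:ℝ)^7)⁻¹ * (1 - r)⁻¹ := by
      calc ∑' i : ℕ, ε (i+1) ≤ ∑' i : ℕ, ((m:ℝ)^7)⁻¹ * r ^ i :=
            hsum.tsum_le_tsum hle hg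
        _ = ((m:ℝ)^7)⁻¹ * (1 - r)⁻¹ := by
            rw [tsum_mul_left, tsum_geometric_of_lt_one hr0 hr1]
    have hm4 : (2:ℝ) ≤ (m:ℝ)^4 := by
      have := pow_le_pow_left₀ (by norm_num : (0:ℝ) ≤ 3) hm3 4
      norm_num at this
      linarith
    have hr2 : r ≤ 2⁻¹ := inv_anti₀ (by norm_num) hm4
    have h1r : (1 - r)⁻¹ ≤ 2 := by
      have h : (2:ℝ)⁻¹ ≤ 1 - r := by linarith
      calc (1 - r)⁻¹ ≤ ((2:ℝ)⁻¹)⁻¹ := inv_anti₀ (by norm_num) h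
        _ = 2 := by norm_num
    have h7 : ((m:ℝ)^7)⁻¹ < 1 := inv_lt_one_of_one_lt₀ (one_lt_pow₀ hm1 (by norm_num))
    have hpos : (0:ℝ) < ((m:ℝ)^7)⁻¹ := inv_pos.mpr (hpow 7)
    calc ∑' i : ℕ, ε (i+1) ≤ ((m:ℝ)^7)⁻¹ * (1 - r)⁻¹ := htsum
      _ ≤ ((m:ℝ)^7)⁻¹ * 2 := mul_le_mul_of_nonneg_left h1r (le_of_lt hpos)
      _ < 2 := by linarith
end

section
/- Let Q be a quiver with vertices 1,…,t, A ∈ R(n⃗,𝔽) a matrix representation of dimension n⃗, and Γ ⊆ Υ_{n⃗} a subset such that R(n⃗,𝔽) = [𝔽^{n⃗×n⃗}, A] ⊕ E_Γ. Then there exist δ > 0 and a map M ↦ S(M) assigning to each M ∈ R(n⃗,𝔽) with ‖M‖ < δ an n⃗-sequence S(M) = (S(M)₁,…,S(M)_t) of invertible matrices, whose entries are holomorphic (real-analytic when 𝔽 = ℝ) functions of the entries of M on {M : ‖M‖ < δ}, such that S(0) = I_{n⃗} and, for every M with ‖M‖ < δ, the representation with matrices S(M)_q (A_α + M_α) S(M)_p^{-1}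 − A_α (α : p → q) belongs to E_Γ. -/
open Matrix Filter Pointwise

variable {V Arrow : Type} {src tgt : Arrow → V} {N : V → Type} {𝔽 : Type} [RCLike 𝔽]

/-- `n⃗`-sequences: tuples `(C_v)_{v ∈ V}` of square matrices `C_v ∈ 𝔽^{N v × N v}`. -/
abbrev QSeq (V : Type) (N : V → Type) (𝔽 : Type) : Type := ∀ v : V, Matrix (N v) (N v) 𝔽

variable {V Arrow : Type} {src tgt : Arrow → V} {N : V → Type} {𝔽 : Type} [RCLike 𝔽]

/-- `‖M‖`: the sum of the absolute values of all entries of all matrices of `M`. -/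
def repNorm [Fintype Arrow] [∀ v, Fintype (N v)] (M : QRep V Arrow src tgt N 𝔽) : ℝ :=
  ∑ α : Arrow, ∑ i, ∑ j, ‖M α i j‖

/-- `‖M‖_Γ`: the sum of the absolute values of the entries `m_{αij}` with `(α,i,j) ∉ Γ`. -/
def repNormGamma [Fintype Arrow] [DecidableEq Arrow]
    [∀ v, Fintype (N v)] [∀ v, DecidableEq (N v)]
    (Γ : Finset (QIdx V Arrow src tgt N)) (M : QRep V Arrow src tgt N 𝔽) : ℝ :=
  ∑ x ∈ Γᶜ, ‖M x.1 x.2.1 x.2.2‖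

/-- The norm of an `n⃗`-sequence: the sum of the absolute values of all entries. -/
def seqNorm [Fintype V] [∀ v, Fintype (N v)] (X : QSeq V N 𝔽) : ℝ :=
  ∑ v, ∑ i, ∑ j, ‖X v i j‖

/-- The representation whose matrix entries are given by a tuple `f : Υ → 𝔽`. -/
def ofEntries (f : QIdx V Arrow src tgt N → 𝔽) : QRep V Arrow src tgt N 𝔽 :=
  fun α => Matrix.of fun i j => f ⟨α, (i, j)⟩

section Reduction

namespace GlobalRed
set_option linter.unusedSectionVars false

abbrev SIdx (V : Type) (N : V → Type) : Type := Σ v : V, N v × N v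

variable {V Arrow : Type} [Fintype V] [DecidableEq V] [Fintype Arrow] [DecidableEq Arrow]
  {src tgt : Arrow → V} {N : V → Type} [∀ v, Fintype (N v)] [∀ v, DecidableEq (N v)]
  {𝔽 : Type} [RCLike 𝔽]

/-- The parameter space. -/
abbrev ZZ (V Arrow : Type) (src tgt : Arrow → V) (N : V → Type) (𝔽 : Type) : Type :=
  (SIdx V N → 𝔽) × (QIdx V Arrow src tgt N → 𝔽)

def cmat (c : SIdx V N → 𝔽) (v : V) : Matrix (N v) (N v) 𝔽 :=
  Matrix.of fun i j => c ⟨v, (i, j)⟩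

def emat (Γ : Finset (QIdx V Arrow src tgt N)) (g : QIdx V Arrow src tgt N → 𝔽) :
    QRep V Arrow src tgt N 𝔽 :=
  fun α => Matrix.of fun i j =>
    if (⟨α, (i, j)⟩ : QIdx V Arrow src tgt N) ∈ Γ then g ⟨α, (i, j)⟩ else 0

def entr (M : QRep V Arrow src tgt N 𝔽) : QIdx V Arrow src tgt N → 𝔽 :=
  fun x => M x.1 x.2.1 x.2.2

@[simp] lemma cmat_apply (c : SIdx V N → 𝔽) (v : V) (i j : N v) :
    cmat c v i j = c ⟨v, (i, j)⟩ := rfl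

@[simp] lemma emat_apply (Γ : Finset (QIdx V Arrow src tgt N))
    (g : QIdx V Arrow src tgt N → 𝔽) (α : Arrow) (i : N (tgt α)) (j : N (src α)) :
    emat Γ g α i j
      = if (⟨α, (i, j)⟩ : QIdx V Arrow src tgt N) ∈ Γ then g ⟨α, (i, j)⟩ else 0 := rfl

@[simp] lemma entr_apply (M : QRep V Arrow src tgt N 𝔽) (x : QIdx V Arrow src tgt N) :
    entr M x = M x.1 x.2.1 x.2.2 := rfl

@[simp] lemma cmat_zero (v : V) : cmat (0 : SIdx V N → 𝔽) v = 0 := by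
  ext i j; simp [cmat]

@[simp] lemma emat_zero (Γ : Finset (QIdx V Arrow src tgt N)) (α : Arrow) :
    emat Γ (0 : QIdx V Arrow src tgt N → 𝔽) α = 0 := by
  ext i j; simp [emat]

lemma mem_eGamma_iff (Γ : Finset (QIdx V Arrow src tgt N)) (R : QRep V Arrow src tgt N 𝔽) :
    R ∈ eGamma (𝔽 := 𝔽) Γ ↔ ∀ x : QIdx V Arrow src tgt N, x ∉ Γ → R x.1 x.2.1 x.2.2 = 0 := by
  constructor
  · intro hR
    let K : Submodule 𝔽 (QRep V Arrow src tgt N 𝔽) :=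
      { carrier := {R | ∀ x : QIdx V Arrow src tgt N, x ∉ Γ → R x.1 x.2.1 x.2.2 = 0}
        add_mem' := fun {a b} ha hb x hx => by
          simp only [Pi.add_apply, Matrix.add_apply, ha x hx, hb x hx, add_zero]
        zero_mem' := fun x hx => rfl
        smul_mem' := fun a {R} hR x hx => by
          simp only [Pi.smul_apply, Matrix.smul_apply, hR x hx, smul_zero] }
    have hle : Submodule.span 𝔽 ((elemRep (𝔽 := 𝔽)) '' (↑Γ : Set (QIdx V Arrow src tgt N))) ≤ K := by
      rw [Submodule.span_le]
      rintro _ ⟨y, hy, rfl⟩ x hx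
      show elemRep (𝔽 := 𝔽) y x.1 x.2.1 x.2.2 = 0
      rw [elemRep, if_neg]
      intro h
      apply hx
      have hx' : (⟨x.1, (x.2.1, x.2.2)⟩ : QIdx V Arrow src tgt N) = x := rfl
      rw [← hx', h]; exact hy
    exact hle hR
  · intro hR
    have hrep : R = ∑ x ∈ Γ, R x.1 x.2.1 x.2.2 • elemRep (𝔽 := 𝔽) x := by
      funext α
      ext i j
      rw [Finset.sum_apply]
      rw [Matrix.sum_apply]
      simp only [Pi.smul_apply, Matrix.smul_apply, elemRep, smul_eq_mul, mul_ite, mul_one,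
        mul_zero]
      rw [Finset.sum_ite_eq]
      by_cases h : (⟨α, (i, j)⟩ : QIdx V Arrow src tgt N) ∈ Γ
      · simp [h]
      · simp [h, hR _ h]
    rw [hrep]
    exact Submodule.sum_mem _ fun x hx =>
      Submodule.smul_mem _ _ (Submodule.subset_span ⟨x, hx, rfl⟩)

def Tlin (A : QRep V Arrow src tgt N 𝔽) (Γ : Finset (QIdx V Arrow src tgt N)) :
    ZZ V Arrow src tgt N 𝔽 →ₗ[𝔽] (QIdx V Arrow src tgt N → 𝔽) where
  toFun z := fun x => emat Γ z.2 x.1 x.2.1 x.2.2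
    + (A x.1 * cmat z.1 (src x.1)) x.2.1 x.2.2 - (cmat z.1 (tgt x.1) * A x.1) x.2.1 x.2.2
  map_add' z w := by
    funext x
    simp only [emat_apply, cmat_apply, Matrix.mul_apply, Prod.fst_add, Prod.snd_add,
      Pi.add_apply, mul_add, add_mul, Finset.sum_add_distrib]
    split_ifs <;> ring
  map_smul' a z := by
    funext x
    simp only [emat_apply, cmat_apply, Matrix.mul_apply, Prod.smul_fst, Prod.smul_snd,
      Pi.smul_apply, smul_eq_mul, RingHom.id_apply, mul_ite, mul_zero, Finset.mul_sum]
    split_ifs <;> ring_nf <;> simp [Finset.mul_sum, mul_assoc, mul_left_comm]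

def Qmat (A : QRep V Arrow src tgt N 𝔽) (Γ : Finset (QIdx V Arrow src tgt N))
    (z : ZZ V Arrow src tgt N 𝔽) (α : Arrow) : Matrix (N (tgt α)) (N (src α)) 𝔽 :=
  (A α + emat Γ z.2 α) * (1 + cmat z.1 (src α)) - (1 + cmat z.1 (tgt α)) * A α

noncomputable def Psi (A : QRep V Arrow src tgt N 𝔽) (Γ : Finset (QIdx V Arrow src tgt N))
    (z : ZZ V Arrow src tgt N 𝔽) : QIdx V Arrow src tgt N → 𝔽 :=
  fun x => ((1 + cmat z.1 (tgt x.1))⁻¹ * Qmat A Γ z x.1) x.2.1 x.2.2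

lemma Qmat_zero (A : QRep V Arrow src tgt N 𝔽) (Γ : Finset (QIdx V Arrow src tgt N))
    (α : Arrow) : Qmat A Γ (0 : ZZ V Arrow src tgt N 𝔽) α = 0 := by
  simp [Qmat]

lemma Psi_zero (A : QRep V Arrow src tgt N 𝔽) (Γ : Finset (QIdx V Arrow src tgt N)) :
    Psi A Γ (0 : ZZ V Arrow src tgt N 𝔽) = 0 := by
  funext x
  simp [Psi, Qmat_zero]

lemma Tlin_surjective (A : QRep V Arrow src tgt N 𝔽) (Γ : Finset (QIdx V Arrow src tgt N))
    (hsum : bracketSet A + eGamma (𝔽 := 𝔽) Γ = Set.univ) :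
    LinearMap.range (Tlin A Γ) = ⊤ := by
  rw [LinearMap.range_eq_top]
  intro y
  have hmem : ofEntries y ∈ bracketSet A + eGamma (𝔽 := 𝔽) Γ := by
    rw [hsum]; exact Set.mem_univ _
  obtain ⟨b, hb, g, hg, hbg⟩ := Set.mem_add.mp hmem
  obtain ⟨C, hC⟩ := hb
  have hGamma := (mem_eGamma_iff Γ g).mp hg
  refine ⟨(fun k => -C k.1 k.2.1 k.2.2, entr g), ?_⟩
  funext x
  obtain ⟨α, i, j⟩ := x
  have h1 : ∀ v, cmat (fun k : SIdx V N => -C k.1 k.2.1 k.2.2) v = -C v := by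
    intro v; ext i' j'; simp [cmat]
  simp only [Tlin, LinearMap.coe_mk, AddHom.coe_mk]
  rw [h1, h1, Matrix.mul_neg, Matrix.neg_mul, Matrix.neg_apply, Matrix.neg_apply]
  have hy : b α i j + g α i j = y ⟨α, (i, j)⟩ := by
    have h2 : (b + g) α i j = ofEntries y α i j := by rw [hbg]
    simpa [ofEntries] using h2
  rw [← hy, hC α, Matrix.sub_apply]
  by_cases h : (⟨α, (i, j)⟩ : QIdx V Arrow src tgt N) ∈ Γ
  · simp only [emat_apply, if_pos h, entr_apply]
    ring
  · simp only [emat_apply, if_neg h]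
    rw [hGamma _ h]
    ring

section AuxAnalytic
variable {𝕜 : Type*} [RCLike 𝕜] {E : Type*} [NormedAddCommGroup E] [NormedSpace 𝕜 E]
  {n : Type*} [Fintype n] [DecidableEq n]

lemma analyticAt_det' {f : E → Matrix n n 𝕜} {x : E}
    (hf : ∀ i j, AnalyticAt 𝕜 (fun z => f z i j) x) :
    AnalyticAt 𝕜 (fun z => (f z).det) x := by
  simp_rw [Matrix.det_apply']
  exact Finset.analyticAt_fun_sum _ fun σ _ =>
    analyticAt_const.mul (Finset.analyticAt_fun_prod _ fun i _ => hf _ _)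

lemma analyticAt_adjugate' {f : E → Matrix n n 𝕜} {x : E}
    (hf : ∀ i j, AnalyticAt 𝕜 (fun z => f z i j) x) (i j : n) :
    AnalyticAt 𝕜 (fun z => (f z).adjugate i j) x := by
  simp_rw [Matrix.adjugate_apply]
  apply analyticAt_det'
  intro i' j'
  rcases eq_or_ne i' j with h | h
  · simp only [Matrix.updateRow_apply, h, if_pos rfl]
    exact analyticAt_const
  · simp only [Matrix.updateRow_apply, h, if_neg h]
    exact hf _ _

lemma analyticAt_matrix_inv_entry {f : E → Matrix n n 𝕜} {x : E}
    (hf : ∀ i j, AnalyticAt 𝕜 (fun z => f z i j) x) (hdet : (f x).det ≠ 0) (i j : n) :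
    AnalyticAt 𝕜 (fun z => (f z)⁻¹ i j) x := by
  simp_rw [Matrix.inv_def, Matrix.smul_apply, Ring.inverse_eq_inv, smul_eq_mul]
  exact ((analyticAt_det' hf).inv hdet).mul (analyticAt_adjugate' hf i j)
end AuxAnalytic

section Analytic
variable (A : QRep V Arrow src tgt N 𝔽) (Γ : Finset (QIdx V Arrow src tgt N))

lemma analyticAt_coord1 (y : SIdx V N) (z0 : ZZ V Arrow src tgt N 𝔽) :
    AnalyticAt 𝔽 (fun z : ZZ V Arrow src tgt N 𝔽 => z.1 y) z0 :=
  ((ContinuousLinearMap.proj (R := 𝔽) (φ := fun _ : SIdx V N => 𝔽) y).comp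
    (ContinuousLinearMap.fst 𝔽 _ _)).analyticAt z0

lemma analyticAt_coord2 (y : QIdx V Arrow src tgt N) (z0 : ZZ V Arrow src tgt N 𝔽) :
    AnalyticAt 𝔽 (fun z : ZZ V Arrow src tgt N 𝔽 => z.2 y) z0 :=
  ((ContinuousLinearMap.proj (R := 𝔽) (φ := fun _ : QIdx V Arrow src tgt N => 𝔽) y).comp
    (ContinuousLinearMap.snd 𝔽 _ _)).analyticAt z0

lemma analyticAt_emat_entry (α : Arrow) (k : N (tgt α)) (l : N (src α))
    (z0 : ZZ V Arrow src tgt N 𝔽) :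
    AnalyticAt 𝔽 (fun z : ZZ V Arrow src tgt N 𝔽 => emat Γ z.2 α k l) z0 := by
  by_cases h : (⟨α, (k, l)⟩ : QIdx V Arrow src tgt N) ∈ Γ
  · simp only [emat_apply, if_pos h]
    exact analyticAt_coord2 _ _
  · simp only [emat_apply, if_neg h]
    exact analyticAt_const

lemma analyticAt_qmat_entry (α : Arrow) (k : N (tgt α)) (l : N (src α))
    (z0 : ZZ V Arrow src tgt N 𝔽) :
    AnalyticAt 𝔽 (fun z : ZZ V Arrow src tgt N 𝔽 => Qmat A Γ z α k l) z0 := by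
  simp only [Qmat, Matrix.sub_apply, Matrix.mul_apply, Matrix.add_apply, cmat_apply]
  apply AnalyticAt.sub
  · exact Finset.analyticAt_fun_sum _ fun m _ =>
      (analyticAt_const.add (analyticAt_emat_entry Γ α k m z0)).mul
        (analyticAt_const.add (analyticAt_coord1 _ _))
  · exact Finset.analyticAt_fun_sum _ fun m _ =>
      (analyticAt_const.add (analyticAt_coord1 _ _)).mul analyticAt_const

lemma analyticAt_inv_entry_zero (v : V) (i k : N v) :
    AnalyticAt 𝔽 (fun z : ZZ V Arrow src tgt N 𝔽 => (1 + cmat z.1 v)⁻¹ i k)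
      (0 : ZZ V Arrow src tgt N 𝔽) := by
  apply analyticAt_matrix_inv_entry (f := fun z : ZZ V Arrow src tgt N 𝔽 => 1 + cmat z.1 v)
  · intro i' j'
    simp only [Matrix.add_apply, cmat_apply]
    exact analyticAt_const.add (analyticAt_coord1 _ _)
  · simp

lemma psi_analyticAt_zero : AnalyticAt 𝔽 (Psi A Γ) (0 : ZZ V Arrow src tgt N 𝔽) := by
  apply AnalyticAt.pi (f := fun (x : QIdx V Arrow src tgt N) (z : ZZ V Arrow src tgt N 𝔽) =>
    Psi A Γ z x)
  intro x
  have hrw : (fun z : ZZ V Arrow src tgt N 𝔽 => Psi A Γ z x)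
      = fun z => ∑ k, (1 + cmat z.1 (tgt x.1))⁻¹ x.2.1 k * Qmat A Γ z x.1 k x.2.2 := by
    funext z; simp [Psi, Matrix.mul_apply]
  rw [hrw]
  exact Finset.analyticAt_fun_sum _ fun m _ =>
    (analyticAt_inv_entry_zero _ _ _).mul (analyticAt_qmat_entry A Γ _ _ _ _)

end Analytic

section Deriv
variable (A : QRep V Arrow src tgt N 𝔽) (Γ : Finset (QIdx V Arrow src tgt N))

noncomputable def Tclm : ZZ V Arrow src tgt N 𝔽 →L[𝔽] (QIdx V Arrow src tgt N → 𝔽) :=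
  (Tlin A Γ).toContinuousLinearMap

@[simp] lemma Tclm_apply (z : ZZ V Arrow src tgt N 𝔽) : Tclm A Γ z = Tlin A Γ z := rfl

lemma hasFDerivAt_psi :
    HasFDerivAt (Psi A Γ) (Tclm A Γ) (0 : ZZ V Arrow src tgt N 𝔽) := by
  apply hasFDerivAt_pi''
  rintro ⟨α, i, j⟩
  have hrw : (fun z : ZZ V Arrow src tgt N 𝔽 => Psi A Γ z ⟨α, (i, j)⟩)
      = fun z => ∑ k, (1 + cmat z.1 (tgt α))⁻¹ i k *
          (Tlin A Γ z ⟨α, (k, j)⟩ + ∑ l, emat Γ z.2 α k l * cmat z.1 (src α) l j) := by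
    funext z
    have hQ : Qmat A Γ z α = A α * cmat z.1 (src α) + emat Γ z.2 α
        + emat Γ z.2 α * cmat z.1 (src α) - cmat z.1 (tgt α) * A α := by
      simp only [Qmat]
      rw [Matrix.add_mul, Matrix.mul_add, Matrix.mul_add, Matrix.mul_one, Matrix.mul_one,
        Matrix.add_mul, Matrix.one_mul]
      abel
    simp only [Psi, Matrix.mul_apply, hQ, Tlin, LinearMap.coe_mk, AddHom.coe_mk,
      Matrix.sub_apply, Matrix.add_apply, Matrix.mul_apply]
    congr 1; funext k; ring
  rw [hrw]
  have hD : ∀ k : N (tgt α), HasFDerivAt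
      (fun z : ZZ V Arrow src tgt N 𝔽 => (1 + cmat z.1 (tgt α))⁻¹ i k *
        (Tlin A Γ z ⟨α, (k, j)⟩ + ∑ l, emat Γ z.2 α k l * cmat z.1 (src α) l j))
      ((if i = k then (1 : 𝔽) else 0) •
        ((ContinuousLinearMap.proj (⟨α, (k, j)⟩ : QIdx V Arrow src tgt N)).comp (Tclm A Γ)))
      (0 : ZZ V Arrow src tgt N 𝔽) := by
    intro k
    have hu : HasFDerivAt (fun z : ZZ V Arrow src tgt N 𝔽 => (1 + cmat z.1 (tgt α))⁻¹ i k)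
        (fderiv 𝔽 (fun z : ZZ V Arrow src tgt N 𝔽 => (1 + cmat z.1 (tgt α))⁻¹ i k) 0)
        (0 : ZZ V Arrow src tgt N 𝔽) :=
      (analyticAt_inv_entry_zero (tgt α) i k).differentiableAt.hasFDerivAt
    have hT : HasFDerivAt (fun z : ZZ V Arrow src tgt N 𝔽 => Tlin A Γ z ⟨α, (k, j)⟩)
        ((ContinuousLinearMap.proj (⟨α, (k, j)⟩ : QIdx V Arrow src tgt N)).comp (Tclm A Γ))
        (0 : ZZ V Arrow src tgt N 𝔽) :=
      ((ContinuousLinearMap.proj (⟨α, (k, j)⟩ : QIdx V Arrow src tgt N)).comp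
        (Tclm A Γ)).hasFDerivAt
    have hB : HasFDerivAt
        (fun z : ZZ V Arrow src tgt N 𝔽 => ∑ l, emat Γ z.2 α k l * cmat z.1 (src α) l j)
        (0 : ZZ V Arrow src tgt N 𝔽 →L[𝔽] 𝔽) (0 : ZZ V Arrow src tgt N 𝔽) := by
      have h0 : (0 : ZZ V Arrow src tgt N 𝔽 →L[𝔽] 𝔽)
          = ∑ l : N (src α), (0 : ZZ V Arrow src tgt N 𝔽 →L[𝔽] 𝔽) := by simp
      rw [h0]
      apply HasFDerivAt.fun_sum
      intro l _
      have he : ∃ E' : ZZ V Arrow src tgt N 𝔽 →L[𝔽] 𝔽,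
          HasFDerivAt (fun z : ZZ V Arrow src tgt N 𝔽 => emat Γ z.2 α k l) E'
            (0 : ZZ V Arrow src tgt N 𝔽) := by
        exact ⟨_, (analyticAt_emat_entry Γ α k l 0).differentiableAt.hasFDerivAt⟩
      obtain ⟨E', hE'⟩ := he
      have hcA : AnalyticAt 𝔽 (fun z : ZZ V Arrow src tgt N 𝔽 => cmat z.1 (src α) l j)
          (0 : ZZ V Arrow src tgt N 𝔽) := by
        simp only [cmat_apply]
        exact analyticAt_coord1 _ _
      have hc := hcA.differentiableAt.hasFDerivAt
      have hprod := hE'.fun_mul hc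
      refine hprod.congr_fderiv ?_
      simp
      refine ContinuousLinearMap.ext fun z => ?_
      simp
    have hw := hT.fun_add hB
    have hprod := hu.fun_mul hw
    refine hprod.congr_fderiv ?_
    symm
    have hu0 : (1 + cmat ((0 : ZZ V Arrow src tgt N 𝔽)).1 (tgt α))⁻¹ i k
        = if i = k then (1 : 𝔽) else 0 := by
      simp [Matrix.one_apply]
    have hw0 : Tlin A Γ (0 : ZZ V Arrow src tgt N 𝔽) ⟨α, (k, j)⟩
        + ∑ l, emat Γ ((0 : ZZ V Arrow src tgt N 𝔽)).2 α k l
            * cmat ((0 : ZZ V Arrow src tgt N 𝔽)).1 (src α) l j = 0 := by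
      simp [map_zero]
    rw [hu0, hw0]
    simp only [zero_smul, add_zero, ite_smul, one_smul]
    split_ifs <;> simp
    all_goals (refine ContinuousLinearMap.ext fun z => ?_; simp)
  have hsum := HasFDerivAt.fun_sum (fun k (_ : k ∈ Finset.univ) => hD k)
  convert hsum using 1
  refine ContinuousLinearMap.ext fun z => ?_
  simp only [ContinuousLinearMap.coe_comp', Function.comp_apply, ContinuousLinearMap.proj_apply,
    ContinuousLinearMap.sum_apply, ContinuousLinearMap.smul_apply,
    smul_eq_mul, ite_mul, one_mul, zero_mul, Tclm_apply, ite_smul, one_smul, zero_smul]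
  have hterm : ∀ d : N (tgt α),
      (if i = d then (ContinuousLinearMap.proj (⟨α, (d, j)⟩ : QIdx V Arrow src tgt N)).comp
          (Tclm A Γ)
        else (0 : 𝔽) • (ContinuousLinearMap.proj (⟨α, (d, j)⟩ : QIdx V Arrow src tgt N)).comp
          (Tclm A Γ)) z
      = if i = d then Tlin A Γ z ⟨α, (d, j)⟩ else 0 := by
    intro d; split_ifs <;> simp
  rw [Finset.sum_congr rfl fun d (_ : d ∈ Finset.univ) => hterm d, Finset.sum_ite_eq]
  simp

end Deriv

end GlobalRed
end Reduction

/-- **Lemma 9 / Theorem 3 (reduction).** Let `A` be a representation of a quiver with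
vertices `1,…,t` and let `Γ ⊆ Υ_{n⃗}` satisfy `R(n⃗,𝔽) = [𝔽^{n⃗×n⃗},A] ⊕ E_Γ`. Then there
are `δ > 0` and a map `M ↦ S(M)` assigning to each `M` with `‖M‖ < δ` an invertible
`n⃗`-sequence, whose entries depend holomorphically (real-analytically if `𝔽 = ℝ`) on the
entries of `M`, such that `S(0) = I_{n⃗}` and `S(M)(A+M)S(M)⁻¹ − A ∈ E_Γ` whenever
`‖M‖ < δ`. -/
theorem global_reduction_to_EGamma
    {t : ℕ} {Arrow : Type} [Fintype Arrow] [DecidableEq Arrow]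
    {src tgt : Arrow → Fin t} {N : Fin t → Type}
    [∀ v, Fintype (N v)] [∀ v, DecidableEq (N v)]
    {𝔽 : Type} [RCLike 𝔽]
    (A : QRep (Fin t) Arrow src tgt N 𝔽)
    (Γ : Finset (QIdx (Fin t) Arrow src tgt N))
    (hdirect : bracketSet A ∩ eGamma (𝔽 := 𝔽) Γ = {0} ∧
      bracketSet A + eGamma (𝔽 := 𝔽) Γ = Set.univ) :
    ∃ δ : ℝ, 0 < δ ∧
      ∃ S : QRep (Fin t) Arrow src tgt N 𝔽 → QSeq (Fin t) N 𝔽,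
        (S 0 = fun _ => 1) ∧
        (∀ v i j, AnalyticOnNhd 𝔽
          (fun f : QIdx (Fin t) Arrow src tgt N → 𝔽 => S (ofEntries f) v i j)
          {f | repNorm (ofEntries (𝔽 := 𝔽) f) < δ}) ∧
        ∀ M : QRep (Fin t) Arrow src tgt N 𝔽, repNorm M < δ →
          (∀ v, IsUnit (S M v)) ∧
          (fun α => S M (tgt α) * (A α + M α) * (S M (src α))⁻¹ - A α)
            ∈ eGamma (𝔽 := 𝔽) Γ := by
  classical
  obtain ⟨-, hsum⟩ := hdirect
  obtain ⟨σ, hσ⟩ := (GlobalRed.Tlin A Γ).exists_rightInverse_of_surjective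
    (GlobalRed.Tlin_surjective A Γ hsum)
  set σc : (QIdx (Fin t) Arrow src tgt N → 𝔽) →L[𝔽] GlobalRed.ZZ (Fin t) Arrow src tgt N 𝔽 :=
    LinearMap.toContinuousLinearMap σ with hσcdef
  have hσc : ∀ m, σc m = σ m := fun m => rfl
  set Φ : (QIdx (Fin t) Arrow src tgt N → 𝔽) → (QIdx (Fin t) Arrow src tgt N → 𝔽) :=
    fun m => GlobalRed.Psi A Γ (σc m) with hΦdef
  have hσc0 : σc 0 = 0 := map_zero σc
  have hΦ0 : Φ 0 = 0 := by
    rw [hΦdef]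
    simp only
    rw [hσc0, GlobalRed.Psi_zero]
  have hΦa : AnalyticAt 𝔽 Φ 0 := by
    have h1 : AnalyticAt 𝔽 (GlobalRed.Psi A Γ) (σc 0) := by
      rw [hσc0]; exact GlobalRed.psi_analyticAt_zero A Γ
    exact h1.comp (σc.analyticAt 0)
  have hΦd : HasFDerivAt Φ (ContinuousLinearMap.id 𝔽 _) 0 := by
    have h2 : HasFDerivAt (GlobalRed.Psi A Γ) (GlobalRed.Tclm A Γ) (σc 0) := by
      rw [hσc0]; exact GlobalRed.hasFDerivAt_psi A Γ
    have h3 := h2.comp (0 : QIdx (Fin t) Arrow src tgt N → 𝔽) σc.hasFDerivAt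
    have h4 : (GlobalRed.Tclm A Γ).comp σc
        = ContinuousLinearMap.id 𝔽 (QIdx (Fin t) Arrow src tgt N → 𝔽) := by
      refine ContinuousLinearMap.ext fun m => ?_
      have h5 := LinearMap.congr_fun hσ m
      simpa [hσc] using h5
    rw [h4] at h3
    exact h3
  have hΦs : HasStrictFDerivAt Φ
      ((ContinuousLinearEquiv.refl 𝔽 (QIdx (Fin t) Arrow src tgt N → 𝔽) :
        (QIdx (Fin t) Arrow src tgt N → 𝔽) ≃L[𝔽] (QIdx (Fin t) Arrow src tgt N → 𝔽)) :
        (QIdx (Fin t) Arrow src tgt N → 𝔽) →L[𝔽] (QIdx (Fin t) Arrow src tgt N → 𝔽)) 0 := by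
    have h6 := hΦa.hasStrictFDerivAt
    rw [hΦd.fderiv] at h6
    rw [ContinuousLinearEquiv.coe_refl]
    exact h6
  set inv : (QIdx (Fin t) Arrow src tgt N → 𝔽) → (QIdx (Fin t) Arrow src tgt N → 𝔽) :=
    hΦs.localInverse Φ _ 0 with hinvdef
  have hinv0 : inv 0 = 0 := by
    have h7 := hΦs.localInverse_apply_image
    rwa [hΦ0] at h7
  -- analyticity of the local inverse at 0
  obtain ⟨p, hp⟩ := hΦa
  have hp1 : p 1 = (continuousMultilinearCurryFin1 𝔽 (QIdx (Fin t) Arrow src tgt N → 𝔽)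
      (QIdx (Fin t) Arrow src tgt N → 𝔽)).symm
      ((ContinuousLinearEquiv.refl 𝔽 (QIdx (Fin t) Arrow src tgt N → 𝔽) :
        (QIdx (Fin t) Arrow src tgt N → 𝔽) ≃L[𝔽] (QIdx (Fin t) Arrow src tgt N → 𝔽)) :
        (QIdx (Fin t) Arrow src tgt N → 𝔽) →L[𝔽] (QIdx (Fin t) Arrow src tgt N → 𝔽)) := by
    have h8 := hp.hasFDerivAt.unique hΦd
    rw [ContinuousLinearEquiv.coe_refl, ← h8]
    exact (LinearIsometryEquiv.symm_apply_apply _ _).symm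
  have hsrc : (0 : QIdx (Fin t) Arrow src tgt N → 𝔽) ∈ (hΦs.toOpenPartialHomeomorph Φ).source :=
    hΦs.mem_toOpenPartialHomeomorph_source
  have hpf : HasFPowerSeriesAt (hΦs.toOpenPartialHomeomorph Φ) p 0 := by
    rw [HasStrictFDerivAt.toOpenPartialHomeomorph_coe]
    exact hp
  have hsymm := (hΦs.toOpenPartialHomeomorph Φ).hasFPowerSeriesAt_symm hsrc hpf hp1
  have h9 : (hΦs.toOpenPartialHomeomorph Φ) 0 = 0 := by
    rw [HasStrictFDerivAt.toOpenPartialHomeomorph_coe]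
    exact hΦ0
  rw [h9] at hsymm
  have hinv_an : AnalyticAt 𝔽 inv 0 := by
    rw [hinvdef, HasStrictFDerivAt.localInverse_def]
    exact ⟨_, hsymm⟩
  obtain ⟨ra, hra_pos, hOn⟩ := hinv_an.exists_ball_analyticOnNhd
  -- eventual properties near 0
  have hev1 : ∀ᶠ m in nhds (0 : QIdx (Fin t) Arrow src tgt N → 𝔽), Φ (inv m) = m := by
    have h10 := hΦs.eventually_right_inverse
    rwa [hΦ0] at h10
  have hinvc : ContinuousAt inv 0 := by
    have h11 := hΦs.localInverse_continuousAt
    rwa [hΦ0] at h11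
  have hev2 : ∀ᶠ m in nhds (0 : QIdx (Fin t) Arrow src tgt N → 𝔽),
      ∀ v, IsUnit (1 + GlobalRed.cmat (σc (inv m)).1 v) := by
    rw [Filter.eventually_all]
    intro v
    have houter : Continuous (fun y : QIdx (Fin t) Arrow src tgt N → 𝔽 =>
        (1 + GlobalRed.cmat (σc y).1 v).det) := by
      apply Continuous.matrix_det
      apply Continuous.add continuous_const
      apply continuous_matrix
      intro i j
      simp only [GlobalRed.cmat_apply]
      exact (continuous_apply _).comp (continuous_fst.comp σc.continuous)
    have hcont : ContinuousAt (fun m : QIdx (Fin t) Arrow src tgt N → 𝔽 =>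
        (1 + GlobalRed.cmat (σc (inv m)).1 v).det) 0 :=
      (houter.continuousAt).comp hinvc
    have hval : (1 + GlobalRed.cmat (σc (inv 0)).1 v).det ≠ 0 := by
      rw [hinv0, hσc0]
      simp
    have h12 := hcont.eventually_ne hval
    filter_upwards [h12] with m hm
    rw [Matrix.isUnit_iff_isUnit_det]
    exact isUnit_iff_ne_zero.mpr hm
  obtain ⟨ε, hε_pos, hevP⟩ := Metric.eventually_nhds_iff.mp (hev1.and hev2)
  -- norm comparisons
  have hrepnn : ∀ M : QRep (Fin t) Arrow src tgt N 𝔽, 0 ≤ repNorm M := by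
    intro M
    exact Finset.sum_nonneg fun α _ => Finset.sum_nonneg fun i _ =>
      Finset.sum_nonneg fun j _ => norm_nonneg _
  have hnorm : ∀ M : QRep (Fin t) Arrow src tgt N 𝔽, ‖GlobalRed.entr M‖ ≤ repNorm M := by
    intro M
    rw [pi_norm_le_iff_of_nonneg (hrepnn M)]
    rintro ⟨α, i, j⟩
    calc ‖M α i j‖ ≤ ∑ j', ‖M α i j'‖ :=
          Finset.single_le_sum (fun j' _ => norm_nonneg _) (Finset.mem_univ j)
      _ ≤ ∑ i', ∑ j', ‖M α i' j'‖ :=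
          Finset.single_le_sum (f := fun i' => ∑ j', ‖M α i' j'‖)
            (fun i' _ => Finset.sum_nonneg fun j' _ => norm_nonneg _) (Finset.mem_univ i)
      _ ≤ repNorm M :=
          Finset.single_le_sum (f := fun α' => ∑ i', ∑ j', ‖M α' i' j'‖)
            (fun α' _ => Finset.sum_nonneg fun i' _ =>
              Finset.sum_nonneg fun j' _ => norm_nonneg _) (Finset.mem_univ α)
  have hoe : ∀ f : QIdx (Fin t) Arrow src tgt N → 𝔽, GlobalRed.entr (ofEntries (𝔽 := 𝔽) f) = f := by
    intro f; funext x; rfl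
  -- the data
  refine ⟨min ε ra, lt_min hε_pos hra_pos,
    fun M v => 1 + GlobalRed.cmat (σc (inv (GlobalRed.entr M))).1 v, ?_, ?_, ?_⟩
  · -- S 0 = 1
    funext v
    have hz : GlobalRed.entr (0 : QRep (Fin t) Arrow src tgt N 𝔽)
        = (0 : QIdx (Fin t) Arrow src tgt N → 𝔽) := by
      funext x; rfl
    show 1 + GlobalRed.cmat
      (σc (inv (GlobalRed.entr (0 : QRep (Fin t) Arrow src tgt N 𝔽)))).1 v = 1
    rw [hz, hinv0, hσc0]
    simp
  · -- analyticity
    intro v i j f hf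
    have hfball : f ∈ Metric.ball (0 : QIdx (Fin t) Arrow src tgt N → 𝔽) ra := by
      rw [Metric.mem_ball, dist_zero_right]
      calc ‖f‖ ≤ repNorm (ofEntries (𝔽 := 𝔽) f) := by
            have := hnorm (ofEntries (𝔽 := 𝔽) f); rwa [hoe] at this
        _ < min ε ra := hf
        _ ≤ ra := min_le_right _ _
    have hA := hOn f hfball
    have hfn : (fun f : QIdx (Fin t) Arrow src tgt N → 𝔽 =>
        (1 + GlobalRed.cmat (σc (inv (GlobalRed.entr (ofEntries (𝔽 := 𝔽) f)))).1 v) i j)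
        = fun f : QIdx (Fin t) Arrow src tgt N → 𝔽 =>
          (1 : Matrix (N v) (N v) 𝔽) i j + (σc (inv f)).1 ⟨v, (i, j)⟩ := by
      funext f'
      rw [hoe]
      simp
    rw [hfn]
    apply analyticAt_const.add
    set K : GlobalRed.ZZ (Fin t) Arrow src tgt N 𝔽 →L[𝔽] 𝔽 :=
      (ContinuousLinearMap.proj (R := 𝔽) (φ := fun _ : GlobalRed.SIdx (Fin t) N => 𝔽)
        (⟨v, (i, j)⟩ : GlobalRed.SIdx (Fin t) N)).comp
        (ContinuousLinearMap.fst 𝔽 _ _) with hK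
    have hKcomp := ((K.comp σc).analyticAt (inv f)).comp hA
    exact hKcomp
  · -- main property
    intro M hM
    have hm1 : ‖GlobalRed.entr M‖ < min ε ra := lt_of_le_of_lt (hnorm M) hM
    have hmε : dist (GlobalRed.entr M) 0 < ε := by
      rw [dist_zero_right]
      exact lt_of_lt_of_le hm1 (min_le_left _ _)
    obtain ⟨hright, hunit⟩ := hevP hmε
    refine ⟨hunit, ?_⟩
    set z := σc (inv (GlobalRed.entr M)) with hzdef
    have hunit' : ∀ v, IsUnit (1 + GlobalRed.cmat z.1 v).det :=
      fun v => (Matrix.isUnit_iff_isUnit_det _).mp (hunit v)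
    have hmatrix : ∀ α, (1 + GlobalRed.cmat z.1 (tgt α))⁻¹ * GlobalRed.Qmat A Γ z α = M α := by
      intro α
      ext i j
      exact congrFun hright ⟨α, (i, j)⟩
    have hkey : ∀ α, (1 + GlobalRed.cmat z.1 (tgt α)) * (A α + M α)
        * (1 + GlobalRed.cmat z.1 (src α))⁻¹ = A α + GlobalRed.emat Γ z.2 α := by
      intro α
      have h7 : GlobalRed.Qmat A Γ z α = (1 + GlobalRed.cmat z.1 (tgt α)) * M α := by
        conv_lhs => rw [← Matrix.mul_nonsing_inv_cancel_left
          (1 + GlobalRed.cmat z.1 (tgt α)) (GlobalRed.Qmat A Γ z α) (hunit' (tgt α))]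
        rw [hmatrix α]
      have h8 : (A α + GlobalRed.emat Γ z.2 α) * (1 + GlobalRed.cmat z.1 (src α))
          = (1 + GlobalRed.cmat z.1 (tgt α)) * (A α + M α) := by
        rw [GlobalRed.Qmat, sub_eq_iff_eq_add] at h7
        rw [h7, Matrix.mul_add]
        abel
      rw [← h8, Matrix.mul_nonsing_inv_cancel_right _ _ (hunit' (src α))]
    have hfun : (fun α => (1 + GlobalRed.cmat z.1 (tgt α)) * (A α + M α)
        * (1 + GlobalRed.cmat z.1 (src α))⁻¹ - A α) = GlobalRed.emat Γ z.2 := by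
      funext α
      rw [hkey α]
      exact add_sub_cancel_left _ _
    show (fun α => (1 + GlobalRed.cmat z.1 (tgt α)) * (A α + M α)
        * (1 + GlobalRed.cmat z.1 (src α))⁻¹ - A α) ∈ eGamma (𝔽 := 𝔽) Γ
    rw [hfun, GlobalRed.mem_eGamma_iff]
    intro x hx
    obtain ⟨α, i, j⟩ := x
    simp only [GlobalRed.emat_apply]
    rw [if_neg hx]
end
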